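/- Let ℛ be a left-linear TRS over a signature 𝓕 and let ℛ_g be a growing approximation of ℛ. Then ℛ ∈ CBN-NF_g (i.e., every reducible ground term in 𝒯(𝓕) has an ℛ_g-needed redex) if and only if L(𝒟(ℛ_g)) = ∅, where 𝒟(ℛ_g) is the powerset-pair automaton built from 𝒞'_{NF_{ℛ•}}(ℛ_g). -/

import Mathlib

set_option maxHeartbeats 1000000

/-! ## Terms over a signature -/

/-- Terms over a signature given by a type `F` of function symbols together with
an arity function `ar`; variables are natural numbers. -/
inductive Term (F : Type) (ar : F → ℕ) : Type
  | var : ℕ → Term F ar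
  | app : (f : F) → (Fin (ar f) → Term F ar) → Term F ar

namespace Term

variable {F : Type} {ar : F → ℕ}

/-- The (finite) set of variables of a term. -/
def vars : Term F ar → Finset ℕ
  | var n => {n}
  | app _ ts => Finset.univ.biUnion fun i => (ts i).vars

/-- A term is ground if it contains no variables. -/
def Ground (t : Term F ar) : Prop := t.vars = ∅

/-- The number of occurrences of the variable `n` in a term. -/
def count (n : ℕ) : Term F ar → ℕ
  | var m => if m = n then 1 else 0
  | app _ ts => ∑ i, (ts i).count n

/-- A term is linear if no variable occurs twice in it. -/
def Linear (t : Term F ar) : Prop := ∀ n, t.count n ≤ 1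

/-- Applying a substitution to a term. -/
def subst (σ : ℕ → Term F ar) : Term F ar → Term F ar
  | var n => σ n
  | app f ts => app f fun i => (ts i).subst σ

/-- The subterm at a position (a list of argument indices), if the position is valid. -/
def subtermAt : Term F ar → List ℕ → Option (Term F ar)
  | t, [] => some t
  | var _, _ :: _ => none
  | app f ts, i :: p => if h : i < ar f then (ts ⟨i, h⟩).subtermAt p else none

/-- Replacing the subterm at a position, if the position is valid. -/
def replaceAt : Term F ar → List ℕ → Term F ar → Option (Term F ar)
  | _, [], u => some u
  | var _, _ :: _, _ => none
  | app f ts, i :: p, u =>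
      if h : i < ar f then
        ((ts ⟨i, h⟩).replaceAt p u).map fun s => app f (Function.update ts ⟨i, h⟩ s)
      else none

/-- `s.IsSubtermOf t` : `s` is a subterm of `t`. -/
def IsSubtermOf (s t : Term F ar) : Prop := ∃ p, t.subtermAt p = some s

/-- Relabelling of function symbols along an arity-preserving map of signatures. -/
def relabel {G : Type} {arG : G → ℕ} (φ : F → G) (h : ∀ f, arG (φ f) = ar f) :
    Term F ar → Term G arG
  | var n => var n
  | app f ts => app (φ f) fun i => (ts (Fin.cast (h f) i)).relabel φ h

end Term

/-! ## Rewriting -/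

/-- One-step rewriting with a set of rewrite rules: there are a position `p` of `s`,
a rule `(l, r)` and a substitution `σ` with `s|_p = lσ` and `t = s[rσ]_p`. -/
def Rewrites {F : Type} {ar : F → ℕ} (R : Set (Term F ar × Term F ar))
    (s t : Term F ar) : Prop :=
  ∃ (p : List ℕ) (l r : Term F ar) (σ : ℕ → Term F ar),
    (l, r) ∈ R ∧ s.subtermAt p = some (l.subst σ) ∧ s.replaceAt p (r.subst σ) = some t

/-- Many-step rewriting (reflexive–transitive closure). -/
abbrev RewritesStar {F : Type} {ar : F → ℕ} (R : Set (Term F ar × Term F ar)) :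
    Term F ar → Term F ar → Prop :=
  Relation.ReflTransGen (Rewrites R)

/-- A term rewriting system: a finite set of rules whose left-hand sides are not variables. -/
structure TRS (F : Type) (ar : F → ℕ) where
  rules : Set (Term F ar × Term F ar)
  finite : rules.Finite
  lhs_not_var : ∀ lr ∈ rules, ∀ n, lr.1 ≠ Term.var n

namespace TRS

variable {F : Type} {ar : F → ℕ}

def LeftLinear (R : TRS F ar) : Prop := ∀ lr ∈ R.rules, lr.1.Linear

def RightLinear (R : TRS F ar) : Prop := ∀ lr ∈ R.rules, lr.2.Linear

/-- A TRS is linear if all left- and right-hand sides are linear terms. -/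
def IsLinear (R : TRS F ar) : Prop := R.LeftLinear ∧ R.RightLinear

/-- A TRS is growing if every variable occurring both in the left- and the right-hand
side of a rule occurs at depth 1 in the left-hand side. -/
def Growing (R : TRS F ar) : Prop :=
  ∀ lr ∈ R.rules, ∀ n ∈ lr.1.vars, n ∈ lr.2.vars →
    ∀ (f : F) (ts : Fin (ar f) → Term F ar), lr.1 = Term.app f ts →
      ∀ i, n ∈ (ts i).vars → ts i = Term.var n

/-- A redex is an instance of a left-hand side. -/
def IsRedex (R : TRS F ar) (s : Term F ar) : Prop :=
  ∃ lr ∈ R.rules, ∃ σ : ℕ → Term F ar, s = lr.1.subst σ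

/-- `p` is a redex position of `s`. -/
def RedexPos (R : TRS F ar) (s : Term F ar) (p : List ℕ) : Prop :=
  ∃ u, s.subtermAt p = some u ∧ R.IsRedex u

def Reducible (R : TRS F ar) (s : Term F ar) : Prop := ∃ p, R.RedexPos s p

/-- A term is root-stable if it cannot be rewritten to a redex. -/
def RootStable (R : TRS F ar) (s : Term F ar) : Prop :=
  ¬ ∃ t, RewritesStar R.rules s t ∧ R.IsRedex t

/-- Ground normal forms. -/
def NFset (R : TRS F ar) : Set (Term F ar) := { t | t.Ground ∧ ¬ R.Reducible t }

/-- Ground redexes. -/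
def RedexSet (R : TRS F ar) : Set (Term F ar) := { t | t.Ground ∧ R.IsRedex t }

/-- Root-stable ground terms. -/
def RSset (R : TRS F ar) : Set (Term F ar) := { t | t.Ground ∧ R.RootStable t }

/-- Relabelling a TRS along an arity-preserving map of signatures. -/
def relabel {G : Type} {arG : G → ℕ} (R : TRS F ar) (φ : F → G)
    (h : ∀ f, arG (φ f) = ar f) : TRS G arG where
  rules := (fun lr => (lr.1.relabel φ h, lr.2.relabel φ h)) '' R.rules
  finite := R.finite.image _
  lhs_not_var := by
    rintro lr ⟨lr0, h0, rfl⟩ n hn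
    dsimp only at hn
    cases h1 : lr0.1 with
    | var m => exact absurd h1 (R.lhs_not_var lr0 h0 m)
    | app f ts =>
        rw [h1] at hn
        simp only [Term.relabel] at hn
        cases hn

end TRS

/-! ## Tree automata -/

/-- A transition rule `f(q₁,…,qₙ) → q` of a bottom-up tree automaton. -/
abbrev TARule (F : Type) (ar : F → ℕ) (Q : Type) : Type :=
  (f : F) × ((Fin (ar f) → Q) × Q)

/-- A (finite bottom-up) tree automaton without ε-transitions. -/
structure TreeAutomaton (F : Type) (ar : F → ℕ) (Q : Type) where
  trans : Set (TARule F ar Q)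
  final : Set Q

/-- `Reaches Δ t q` : the ground term `t` rewrites to the state `q` using the
transition rules `Δ`. -/
inductive Reaches {F : Type} {ar : F → ℕ} {Q : Type} (Δ : Set (TARule F ar Q)) :
    Term F ar → Q → Prop
  | app {f : F} {ts : Fin (ar f) → Term F ar} {qs : Fin (ar f) → Q} {q : Q} :
      (∀ i, Reaches Δ (ts i) (qs i)) → (⟨f, qs, q⟩ : TARule F ar Q) ∈ Δ →
      Reaches Δ (Term.app f ts) q

/-- `ReachesT Δ θ t q` : the term `t`, whose variables are interpreted as the states
given by `θ`, rewrites to the state `q` using the transition rules `Δ`. -/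
inductive ReachesT {F : Type} {ar : F → ℕ} {Q : Type} (Δ : Set (TARule F ar Q))
    (θ : ℕ → Q) : Term F ar → Q → Prop
  | var (n : ℕ) : ReachesT Δ θ (Term.var n) (θ n)
  | app {f : F} {ts : Fin (ar f) → Term F ar} {qs : Fin (ar f) → Q} {q : Q} :
      (∀ i, ReachesT Δ θ (ts i) (qs i)) → (⟨f, qs, q⟩ : TARule F ar Q) ∈ Δ →
      ReachesT Δ θ (Term.app f ts) q

/-- The language of a tree automaton: all ground terms reaching a final state. -/
def Lang {F : Type} {ar : F → ℕ} {Q : Type} (A : TreeAutomaton F ar Q) :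
    Set (Term F ar) :=
  { t | t.Ground ∧ ∃ q ∈ A.final, Reaches A.trans t q }

/-- A set of ground terms is recognizable if it is the language of some finite
tree automaton. -/
def Recognizable {F : Type} {ar : F → ℕ} (T : Set (Term F ar)) : Prop :=
  ∃ (Q : Type) (_ : Fintype Q) (A : TreeAutomaton F ar Q), T = Lang A

/-- The set of states occurring in a set of transition rules. -/
def statesOf {F : Type} {ar : F → ℕ} {Q : Type} (Γ : Set (TARule F ar Q)) : Set Q :=
  { q | ∃ ρ ∈ Γ, ρ.2.2 = q ∨ ∃ i, ρ.2.1 i = q }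

/-! ## The automaton `ℬ(ℛ)` -/

/-- The canonical representative of the state `⟨t⟩` of `ℬ(ℛ)`: all variables are
identified with the single state `⟨x⟩`, represented by `var 0`. -/
def stPattern {F : Type} {ar : F → ℕ} : Term F ar → Term F ar
  | Term.var _ => Term.var 0
  | Term.app f ts => Term.app f ts

/-- `S_ℛ`: the set of all subterms of arguments of left-hand sides of `ℛ`. -/
def SR {F : Type} {ar : F → ℕ} (R : TRS F ar) : Set (Term F ar) :=
  { s | ∃ lr ∈ R.rules, ∃ (f : F) (ts : Fin (ar f) → Term F ar),
        lr.1 = Term.app f ts ∧ ∃ i, s.IsSubtermOf (ts i) }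

/-- The representatives of the states of `ℬ(ℛ)`: the patterns of terms of `S_ℛ`,
together with `⟨x⟩`. -/
def BStateSet {F : Type} {ar : F → ℕ} (R : TRS F ar) : Set (Term F ar) :=
  stPattern '' SR R ∪ {Term.var 0}

/-- The matching rules of `ℬ(ℛ)` (with states encoded by `enc`):
`f(⟨t₁⟩,…,⟨tₙ⟩) → ⟨t⟩` for every `t = f(t₁,…,tₙ) ∈ S_ℛ`. -/
def BMatch {F : Type} {ar : F → ℕ} {Q : Type} (R : TRS F ar) (enc : Term F ar → Q) :
    Set (TARule F ar Q) :=
  { ρ | ∃ (f : F) (ts : Fin (ar f) → Term F ar), Term.app f ts ∈ SR R ∧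
        ρ = ⟨f, fun i => enc (stPattern (ts i)), enc (Term.app f ts)⟩ }

/-- The propagation rules `f(⟨x⟩,…,⟨x⟩) → ⟨x⟩` for every function symbol `f`. -/
def BProp {F : Type} {ar : F → ℕ} {Q : Type} (enc : Term F ar → Q) :
    Set (TARule F ar Q) :=
  { ρ | ∃ f : F, ρ = ⟨f, fun _ => enc (Term.var 0), enc (Term.var 0)⟩ }

/-- The transition rules of the automaton `ℬ(ℛ)`. -/
def BTrans {F : Type} {ar : F → ℕ} {Q : Type} (R : TRS F ar) (enc : Term F ar → Q) :
    Set (TARule F ar Q) :=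
  BMatch R enc ∪ BProp enc

/-- `Σ(t)`: the set of ground instances of the term `t`. -/
def GInst {F : Type} {ar : F → ℕ} (t : Term F ar) : Set (Term F ar) :=
  { s | s.Ground ∧ ∃ σ, s = t.subst σ }

/-! ## Saturation -/

/-- The state `qᵢ` associated to the argument `lᵢ` of a left-hand side in the
saturation rule: `lᵢθ` if `lᵢ` is a variable occurring in `r` (whose variable set
is `rv`), and `⟨lᵢ⟩` otherwise. -/
def satArg {F : Type} {ar : F → ℕ} {Q : Type} (enc : Term F ar → Q) (θ : ℕ → Q)
    (rv : Finset ℕ) : Term F ar → Q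
  | Term.var n => if n ∈ rv then θ n else enc (Term.var 0)
  | Term.app f ts => enc (Term.app f ts)

/-- One step of the saturation process: add all transition rules `f(q₁,…,qₙ) → q`
obtained from a rewrite rule `f(l₁,…,lₙ) → r` and a state substitution `θ`
(with values among the states `Qc` of the automaton) such that `rθ →_Γ* q`. -/
def satStep {F : Type} {ar : F → ℕ} {Q : Type} (R : TRS F ar) (enc : Term F ar → Q)
    (Qc : Set Q) (Γ : Set (TARule F ar Q)) : Set (TARule F ar Q) :=
  Γ ∪ { ρ | ∃ (f : F) (ls : Fin (ar f) → Term F ar) (r : Term F ar) (θ : ℕ → Q) (q : Q),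
        (Term.app f ls, r) ∈ R.rules ∧ (∀ n ∈ r.vars, θ n ∈ Qc) ∧ ReachesT Γ θ r q ∧
        ρ = ⟨f, fun i => satArg enc θ r.vars (ls i), q⟩ }

/-- The saturated set of transition rules: the closure of `Γ0` under the saturation
inference rule. -/
def satGamma {F : Type} {ar : F → ℕ} {Q : Type} (R : TRS F ar) (enc : Term F ar → Q)
    (Qc : Set Q) (Γ0 : Set (TARule F ar Q)) : Set (TARule F ar Q) :=
  ⋃ n, (satStep R enc Qc)^[n] Γ0

/-! ## The automaton `𝒞_T(ℛ)` and its extension `𝒞'_T(ℛ)` -/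

/-- The data of the construction of the automaton `𝒞_T(ℛ)`: an automaton `𝒜_T`
recognizing `T` with all states accessible and state set `QA`, together with an
encoding `enc` of the states `⟨t⟩` of `ℬ(ℛ)` into the common state type `Q`, such
that every state common to `𝒜_T` and `ℬ(ℛ)` accepts the same set of terms in both
automata. -/
structure CSetup {G : Type} [Fintype G] {arG : G → ℕ} (Q : Type) [Fintype Q]
    (Rg : TRS G arG) (T : Set (Term G arG)) where
  enc : Term G arG → Q
  A : TreeAutomaton G arG Q
  QA : Set Q
  henc : Set.InjOn enc (BStateSet Rg)
  hAstates : ∀ ρ ∈ A.trans, ρ.2.2 ∈ QA ∧ ∀ i, ρ.2.1 i ∈ QA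
  hfinal : A.final ⊆ QA
  hacc : ∀ q ∈ QA, ∃ s : Term G arG, s.Ground ∧ Reaches A.trans s q
  hground : ∃ s : Term G arG, s.Ground
  hshared : ∀ q ∈ QA ∩ enc '' BStateSet Rg, ∀ s : Term G arG,
      Reaches A.trans s q ↔ Reaches (BTrans Rg enc) s q
  hT : T = Lang A

namespace CSetup

variable {G : Type} [Fintype G] {arG : G → ℕ} {Q : Type} [Fintype Q]
  {Rg : TRS G arG} {T : Set (Term G arG)}

/-- The set of states of the automaton `𝒞_T(ℛ)`. -/
def Qstates (C : CSetup Q Rg T) : Set Q := C.QA ∪ C.enc '' BStateSet Rg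

/-- The transition rules of `𝒞_T(ℛ)` before saturation: the union of `𝒜_T` and `ℬ(ℛ)`. -/
def Γ0 (C : CSetup Q Rg T) : Set (TARule G arG Q) := C.A.trans ∪ BTrans Rg C.enc

/-- The transition rules of `𝒞_T(ℛ)` after saturation. -/
def Γsat (C : CSetup Q Rg T) : Set (TARule G arG Q) :=
  satGamma Rg C.enc C.Qstates C.Γ0

end CSetup

/-- The redex rules `f(⟪l₁⟫,…,⟪lₙ⟫) → q_r` for every left-hand side `f(l₁,…,lₙ)`. -/
def RedexRules {F : Type} {ar : F → ℕ} {Q : Type} (R : TRS F ar)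
    (enc2 : Term F ar → Q) (qr : Q) : Set (TARule F ar Q) :=
  { ρ | ∃ (f : F) (ls : Fin (ar f) → Term F ar) (r : Term F ar),
        (Term.app f ls, r) ∈ R.rules ∧
        ρ = ⟨f, fun i => enc2 (stPattern (ls i)), qr⟩ }

/-- The rules `f(⟨x⟩,…,q_r,…,⟨x⟩) → q_r`. -/
def QrProp {F : Type} {ar : F → ℕ} {Q : Type} (enc : Term F ar → Q) (qr : Q) :
    Set (TARule F ar Q) :=
  { ρ | ∃ (f : F) (j : Fin (ar f)),
        ρ = ⟨f, fun i => if i = j then qr else enc (Term.var 0), qr⟩ }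

/-- The data of the construction of the automaton `𝒞'_T(ℛ)`: `𝒞_T(ℛ)` extended with
a fresh copy `⟪t⟫` (encoded by `enc2`, with `⟪x⟫ = ⟨x⟩`) of the states of `ℬ(ℛ)` and
a fresh state `q_r`. -/
structure CpSetup {G : Type} [Fintype G] {arG : G → ℕ} (Q : Type) [Fintype Q]
    (Rg : TRS G arG) (T : Set (Term G arG)) extends CSetup Q Rg T where
  enc2 : Term G arG → Q
  qr : Q
  henc2 : Set.InjOn enc2 (BStateSet Rg)
  hx : enc2 (Term.var 0) = enc (Term.var 0)
  hfresh : (enc2 '' (BStateSet Rg \ {Term.var 0}) ∪ {qr}) ∩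
              (QA ∪ enc '' BStateSet Rg) = ∅
  hqr : qr ∉ enc2 '' (BStateSet Rg \ {Term.var 0})

namespace CpSetup

variable {G : Type} [Fintype G] {arG : G → ℕ} {Q : Type} [Fintype Q]
  {Rg : TRS G arG} {T : Set (Term G arG)}

/-- The transition rules `Γ'` of the automaton `𝒞'_T(ℛ)`. -/
def Γ' (C : CpSetup Q Rg T) : Set (TARule G arG Q) :=
  C.toCSetup.Γsat ∪ BMatch Rg C.enc2 ∪ RedexRules Rg C.enc2 C.qr ∪ QrProp C.enc C.qr

end CpSetup

/-! ## The signature `𝓖 = 𝓕 ∪ {•}` -/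

/-- The arity function of the extended signature `𝓕 ∪ {•}` (with `•` the fresh
constant `none`). -/
def arB {F : Type} (ar : F → ℕ) : Option F → ℕ
  | none => 0
  | some f => ar f

/-- The term `•`. -/
def bulletTm {F : Type} {ar : F → ℕ} : Term (Option F) (arB ar) :=
  Term.app none Fin.elim0

/-- The embedding of `𝒯(𝓕)`-terms into terms over `𝓕 ∪ {•}`. -/
def liftB {F : Type} {ar : F → ℕ} : Term F ar → Term (Option F) (arB ar) :=
  Term.relabel some (fun _ => rfl)

/-- A TRS over `𝓕` viewed as a TRS over `𝓕 ∪ {•}`. -/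
def TRS.liftB {F : Type} {ar : F → ℕ} (R : TRS F ar) : TRS (Option F) (arB ar) :=
  R.relabel some (fun _ => rfl)

/-- The TRS `ℛ• = ℛ ∪ {• → •}` over the signature `𝓕 ∪ {•}`. -/
def TRS.bullet {F : Type} {ar : F → ℕ} (R : TRS F ar) : TRS (Option F) (arB ar) where
  rules := R.liftB.rules ∪ {(bulletTm, bulletTm)}
  finite := R.liftB.finite.union (Set.finite_singleton _)
  lhs_not_var := by
    rintro lr (h | h) n hn
    · exact R.liftB.lhs_not_var lr h n hn
    · rw [Set.mem_singleton_iff] at h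
      rw [h] at hn
      simp [bulletTm] at hn

/-! ## The automaton `𝒟(ℛ)` -/

/-- For a symbol `g` and sets of states `Ss` for the arguments, the set
`g(S₁,…,Sₙ)↓` of states reachable from `g` applied to states chosen from the `Ssᵢ`. -/
def oneStep {G : Type} {arG : G → ℕ} {Q : Type} (Γ : Set (TARule G arG Q)) (g : G)
    (Ss : Fin (arG g) → Set Q) : Set Q :=
  { q | ∃ qs : Fin (arG g) → Q, (∀ i, qs i ∈ Ss i) ∧ (⟨g, qs, q⟩ : TARule G arG Q) ∈ Γ }

/-- `t↓` for a ground term `t`: the set of states reachable from `t`. -/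
def dn {G : Type} {arG : G → ℕ} {Q : Type} (Γ : Set (TARule G arG Q))
    (t : Term G arG) : Set Q :=
  { q | Reaches Γ t q }

/-- There is a rewrite rule with left-hand side `g(l₁,…,lₙ)` such that
`⟪lᵢ⟫ ∈ Ssᵢ` for all `i`. -/
def LhsMatch {G : Type} {arG : G → ℕ} {Q : Type} (Rg : TRS G arG)
    (enc2 : Term G arG → Q) (g : G) (Ss : Fin (arG g) → Set Q) : Prop :=
  ∃ (ls : Fin (arG g) → Term G arG) (r : Term G arG),
    (Term.app g ls, r) ∈ Rg.rules ∧ ∀ i, enc2 (stPattern (ls i)) ∈ Ss i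

/-- The transition rules of the automaton `𝒟(ℛ)` over `𝓕`, built from the transition
rules `Γ'` of `𝒞'_{NF}(ℛ)` over `𝓕 ∪ {•}`. -/
def DTrans {F : Type} {ar : F → ℕ} {Q : Type} (Rb : TRS (Option F) (arB ar))
    (Γ' : Set (TARule (Option F) (arB ar) Q))
    (enc enc2 : Term (Option F) (arB ar) → Q) :
    Set (TARule F ar (Set Q × Set Q)) :=
  { ρ | ∃ (f : F) (SP : Fin (ar f) → Set Q × Set Q) (P1 P2 : Set Q),
      P1 ⊆ (⋃ i : Fin (ar f), oneStep Γ' (some f)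
              (fun j => @ite _ (j = i) (instDecidableEqFin _ j i) (SP j).2 (SP j).1)) ∧
      (∀ (i : Fin (ar f)), ∀ q ∈ (SP i).2,
        (P1 ∩ oneStep Γ' (some f) (fun j => @ite _ (j = i) (instDecidableEqFin _ j i) {q} (SP j).1)).Nonempty) ∧
      ((LhsMatch Rb enc2 (some f) (fun i => (SP i).1) ∧ P2 = {enc (Term.var 0)}) ∨
       (¬ LhsMatch Rb enc2 (some f) (fun i => (SP i).1) ∧ P2 = (∅ : Set Q))) ∧
      ρ = ⟨f, SP, (oneStep Γ' (some f) (fun i => (SP i).1), P1 ∪ P2)⟩ }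

/-- The automaton `𝒟(ℛ)`: final states are the pairs `[S,P]` with `q_r ∈ S` and
`P ⊆ Q_f`. -/
def DAutomaton {F : Type} {ar : F → ℕ} {Q : Type} (Rb : TRS (Option F) (arB ar))
    (Γ' : Set (TARule (Option F) (arB ar) Q))
    (enc enc2 : Term (Option F) (arB ar) → Q) (qr : Q) (Qf : Set Q) :
    TreeAutomaton F ar (Set Q × Set Q) where
  trans := DTrans Rb Γ' enc enc2
  final := { SP | qr ∈ SP.1 ∧ SP.2 ⊆ Qf }

/-! ## Growing approximations -/

/-- `VarRepl t t'` : `t'` is obtained from `t` by replacing occurrences of variables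
by (possibly other) variables. -/
inductive VarRepl {F : Type} {ar : F → ℕ} : Term F ar → Term F ar → Prop
  | var (n m : ℕ) : VarRepl (Term.var n) (Term.var m)
  | app (f : F) (ts ts' : Fin (ar f) → Term F ar) :
      (∀ i, VarRepl (ts i) (ts' i)) → VarRepl (Term.app f ts) (Term.app f ts')

/-- `Rg` is a growing approximation of `R`: a right-linear growing TRS obtained from
`R` by replacing, in each right-hand side, occurrences of variables by variables not
occurring in the corresponding left-hand side. -/
def IsGrowingApprox {F : Type} {ar : F → ℕ} (R Rg : TRS F ar) : Prop :=
  Rg.RightLinear ∧ Rg.Growing ∧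
  (∀ lr ∈ Rg.rules, ∃ lr' ∈ R.rules, lr.1 = lr'.1 ∧ VarRepl lr'.2 lr.2 ∧
      ∀ n ∈ lr.2.vars, n ∉ lr.1.vars) ∧
  (∀ lr ∈ R.rules, ∃ lr' ∈ Rg.rules, lr.1 = lr'.1 ∧ VarRepl lr.2 lr'.2 ∧
      ∀ n ∈ lr'.2.vars, n ∉ lr'.1.vars)

/-! ## The signature `𝓖 = 𝓕 ∪ {f° : f ∈ 𝓕}` -/

/-- The arity function of the signature `𝓕 ∪ {f° : f ∈ 𝓕}` (`inl f` is `f`,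
`inr f` is `f°`). -/
def arC {F : Type} (ar : F → ℕ) : F ⊕ F → ℕ
  | Sum.inl f => ar f
  | Sum.inr f => ar f

/-- The embedding of `𝒯(𝓕)`-terms into terms over `𝓕 ∪ {f° : f ∈ 𝓕}`. -/
def liftC {F : Type} {ar : F → ℕ} : Term F ar → Term (F ⊕ F) (arC ar) :=
  Term.relabel Sum.inl (fun _ => rfl)

/-- `t°`: mark the root symbol of `t`. -/
def circTm {F : Type} {ar : F → ℕ} : Term F ar → Term (F ⊕ F) (arC ar)
  | Term.var n => Term.var n
  | Term.app f ts => Term.app (Sum.inr f) fun i => liftC (ts i)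

/-- A TRS over `𝓕` viewed as a TRS over `𝓕 ∪ {f° : f ∈ 𝓕}`. -/
def TRS.liftC {F : Type} {ar : F → ℕ} (R : TRS F ar) : TRS (F ⊕ F) (arC ar) :=
  R.relabel Sum.inl (fun _ => rfl)

/-- The TRS `𝒮° = 𝒮 ∪ {l° → r | l → r ∈ 𝒮}` over the signature `𝓕 ∪ {f° : f ∈ 𝓕}`. -/
def TRS.circ {F : Type} {ar : F → ℕ} (S : TRS F ar) : TRS (F ⊕ F) (arC ar) where
  rules := S.liftC.rules ∪ (fun lr => (circTm lr.1, _root_.liftC lr.2)) '' S.rules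
  finite := S.liftC.finite.union (S.finite.image _)
  lhs_not_var := by
    rintro lr (h | ⟨lr0, h0, rfl⟩) n hn
    · exact S.liftC.lhs_not_var lr h n hn
    · dsimp only at hn
      cases h1 : lr0.1 with
      | var m => exact absurd h1 (S.lhs_not_var lr0 h0 m)
      | app f ts =>
          rw [h1] at hn
          simp only [circTm] at hn
          cases hn

/-- The transitions added to `ℬ(𝒮°)` to obtain `𝒜_{REDEX_{𝒮°}}`:
`f(⟨l₁⟩,…,⟨lₙ⟩) → q_f` and `f°(⟨l₁⟩,…,⟨lₙ⟩) → q_f` for each left-hand side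
`f(l₁,…,lₙ)` of a rule of `𝒮`. -/
def CircRedexRules {F : Type} {ar : F → ℕ} {Q : Type} (S : TRS F ar)
    (enc : Term (F ⊕ F) (arC ar) → Q) (qf : Q) : Set (TARule (F ⊕ F) (arC ar) Q) :=
  { ρ | ∃ (f : F) (ls : Fin (ar f) → Term F ar) (r : Term F ar),
      (Term.app f ls, r) ∈ S.rules ∧
      (ρ = ⟨Sum.inl f, fun i => enc (stPattern (liftC (ls i))), qf⟩ ∨
       ρ = ⟨Sum.inr f, fun i => enc (stPattern (liftC (ls i))), qf⟩) }

/-! ## The automaton `𝒟'(ℛ,𝒮)` -/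

/-- The data of the construction of `𝒞'_{RS_{𝒮°}}(ℛ)`: the saturated automaton
`𝒞_{RS_{𝒮°}}(ℛ)`, a fresh copy `⟪t⟫` (encoded by `enc2`, with `⟪x⟫ = ⟨x⟩`) of the
states of `ℬ(ℛ)`, and an automaton `𝒞_{REDEX_𝒮}(𝒮)` (transitions `Etrans`, final
states `Qf'`) recognizing the non-`𝒮`-root-stable ground terms of `𝒯(𝓕)`. -/
structure CrsSetup {F : Type} [Fintype F] {ar : F → ℕ} (Q : Type) [Fintype Q]
    (R S : TRS F ar) extends CSetup Q R.liftC (TRS.RSset S.circ) where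
  enc2 : Term (F ⊕ F) (arC ar) → Q
  henc2 : Set.InjOn enc2 (BStateSet R.liftC)
  hx : enc2 (Term.var 0) = enc (Term.var 0)
  hfresh2 : (enc2 '' (BStateSet R.liftC \ {Term.var 0})) ∩
              (QA ∪ enc '' BStateSet R.liftC) = ∅
  Etrans : Set (TARule (F ⊕ F) (arC ar) Q)
  Qf' : Set Q
  hQf' : Qf' ⊆ statesOf Etrans
  hEfresh : statesOf Etrans ∩
      (QA ∪ enc '' BStateSet R.liftC ∪ enc2 '' (BStateSet R.liftC \ {Term.var 0})) = ∅
  hE : ∀ t : Term (F ⊕ F) (arC ar),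
      (t.Ground ∧ ∃ q ∈ Qf', Reaches Etrans t q) ↔
      (∃ s : Term F ar, t = liftC s ∧ s.Ground ∧ ¬ S.RootStable s)

namespace CrsSetup

variable {F : Type} [Fintype F] {ar : F → ℕ} {Q : Type} [Fintype Q] {R S : TRS F ar}

/-- The transition rules `Γ'` of the automaton `𝒞'_{RS_{𝒮°}}(ℛ)`. -/
def Γ' (C : CrsSetup Q R S) : Set (TARule (F ⊕ F) (arC ar) Q) :=
  C.toCSetup.Γsat ∪ BMatch R.liftC C.enc2 ∪ C.Etrans

end CrsSetup

/-- The transition rules of the automaton `𝒟'(ℛ,𝒮)` over `𝓕`, built from the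
transition rules `Γ'` of `𝒞'_{RS_{𝒮°}}(ℛ)`. -/
def DTransRS {F : Type} {ar : F → ℕ} {Q : Type} (Rg : TRS (F ⊕ F) (arC ar))
    (Γ' : Set (TARule (F ⊕ F) (arC ar) Q)) (enc2 : Term (F ⊕ F) (arC ar) → Q) :
    Set (TARule F ar (Set Q × Set Q)) :=
  { ρ | ∃ (f : F) (SP : Fin (ar f) → Set Q × Set Q) (P1 P2 : Set Q),
      P1 ⊆ (⋃ i : Fin (ar f), oneStep Γ' (Sum.inl f)
              (fun j => @ite _ (j = i) (instDecidableEqFin _ j i) (SP j).2 (SP j).1)) ∧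
      (∀ (i : Fin (ar f)), ∀ q ∈ (SP i).2,
        (P1 ∩ oneStep Γ' (Sum.inl f) (fun j => @ite _ (j = i) (instDecidableEqFin _ j i) {q} (SP j).1)).Nonempty) ∧
      ((LhsMatch Rg enc2 (Sum.inl f) (fun i => (SP i).1) ∧ P2.Nonempty ∧
          P2 ⊆ oneStep Γ' (Sum.inr f) (fun i => (SP i).1)) ∨
       (¬ LhsMatch Rg enc2 (Sum.inl f) (fun i => (SP i).1) ∧ P2 = (∅ : Set Q))) ∧
      ρ = ⟨f, SP, (oneStep Γ' (Sum.inl f) (fun i => (SP i).1), P1 ∪ P2)⟩ }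

/-- The automaton `𝒟'(ℛ,𝒮)`: final states are the pairs `[S,P]` with
`S ∩ Q_f' ≠ ∅` and `P ⊆ Q_f`. -/
def DAutomatonRS {F : Type} {ar : F → ℕ} {Q : Type} (Rg : TRS (F ⊕ F) (arC ar))
    (Γ' : Set (TARule (F ⊕ F) (arC ar) Q)) (enc2 : Term (F ⊕ F) (arC ar) → Q)
    (Qf' Qf : Set Q) : TreeAutomaton F ar (Set Q × Set Q) where
  trans := DTransRS Rg Γ' enc2
  final := { SP | (SP.1 ∩ Qf').Nonempty ∧ SP.2 ⊆ Qf }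

/-! ## Auxiliary development for Statement 12 -/


section S12Terms

open Term

variable {F : Type} {ar : F → ℕ}

theorem S12.ground_app {f : F} {ts : Fin (ar f) → Term F ar} :
    (Term.app f ts).Ground ↔ ∀ i, (ts i).Ground := by
  simp only [Term.Ground, Term.vars]
  constructor
  · intro h i
    rw [Finset.eq_empty_iff_forall_notMem] at h ⊢
    intro n hn
    exact h n (Finset.mem_biUnion.2 ⟨i, Finset.mem_univ i, hn⟩)
  · intro h
    rw [Finset.eq_empty_iff_forall_notMem]
    intro n hn
    obtain ⟨i, _, hn⟩ := Finset.mem_biUnion.1 hn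
    rw [h i] at hn
    exact absurd hn (Finset.notMem_empty n)

theorem S12.ground_var (n : ℕ) : ¬ (Term.var (F := F) (ar := ar) n).Ground := by
  simp [Term.Ground, Term.vars]

theorem S12.mem_vars_iff {t : Term F ar} {n : ℕ} : n ∈ t.vars ↔ 0 < t.count n := by
  induction t with
  | var m =>
      simp only [Term.vars, Term.count, Finset.mem_singleton]
      split <;> simp_all [eq_comm]
  | app f ts ih =>
      simp only [Term.vars, Term.count, Finset.mem_biUnion, Finset.mem_univ, true_and]
      constructor
      · rintro ⟨i, hi⟩
        calc 0 < (ts i).count n := (ih i).1 hi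
        _ ≤ _ := Finset.single_le_sum (f := fun j => (ts j).count n)
              (fun j _ => Nat.zero_le _) (Finset.mem_univ i)
      · intro h
        by_contra hc
        push_neg at hc
        have : ∑ i, (ts i).count n = 0 := Finset.sum_eq_zero (fun i _ =>
          Nat.eq_zero_of_not_pos (fun hp => hc i ((ih i).2 hp)))
        omega

theorem S12.linear_arg {f : F} {ts : Fin (ar f) → Term F ar}
    (h : (Term.app f ts).Linear) (i : Fin (ar f)) : (ts i).Linear := by
  intro n
  have := h n
  simp only [Term.count] at this
  exact le_trans (Finset.single_le_sum (f := fun j => (ts j).count n)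
    (fun j _ => Nat.zero_le _) (Finset.mem_univ i)) this

theorem S12.linear_disjoint {f : F} {ts : Fin (ar f) → Term F ar}
    (h : (Term.app f ts).Linear) {n : ℕ} {i j : Fin (ar f)}
    (hi : n ∈ (ts i).vars) (hj : n ∈ (ts j).vars) : i = j := by
  by_contra hne
  have hc := h n
  simp only [Term.count] at hc
  have h2 : (ts i).count n + (ts j).count n ≤ ∑ k, (ts k).count n := by
    have : ({i, j} : Finset (Fin (ar f))).sum (fun k => (ts k).count n)
        ≤ ∑ k, (ts k).count n :=
      Finset.sum_le_sum_of_subset (Finset.subset_univ _)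
    rwa [Finset.sum_pair hne] at this
  rw [S12.mem_vars_iff] at hi hj
  omega

theorem S12.subst_congr {t : Term F ar} {σ σ' : ℕ → Term F ar}
    (h : ∀ n ∈ t.vars, σ n = σ' n) : t.subst σ = t.subst σ' := by
  induction t with
  | var n => exact h n (by simp [Term.vars])
  | app f ts ih =>
      simp only [Term.subst]
      congr 1
      funext i
      refine ih i (fun n hn => h n ?_)
      simp only [Term.vars, Finset.mem_biUnion]
      exact ⟨i, Finset.mem_univ i, hn⟩

theorem S12.subst_subst (t : Term F ar) (σ τ : ℕ → Term F ar) :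
    (t.subst σ).subst τ = t.subst (fun n => (σ n).subst τ) := by
  induction t with
  | var n => rfl
  | app f ts ih => simp only [Term.subst]; congr 1; funext i; exact ih i

theorem S12.subst_ground {t : Term F ar} (h : t.Ground) (σ : ℕ → Term F ar) :
    t.subst σ = t := by
  induction t with
  | var n => exact absurd h (S12.ground_var n)
  | app f ts ih =>
      simp only [Term.subst]
      congr 1
      funext i
      exact ih i (S12.ground_app.1 h i)

theorem S12.ground_subst {t : Term F ar} {σ : ℕ → Term F ar}
    (h : ∀ n, (σ n).Ground) : (t.subst σ).Ground := by
  induction t with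
  | var n => exact h n
  | app f ts ih => exact S12.ground_app.2 (fun i => ih i)

theorem S12.ground_subst_of_vars {t : Term F ar} {σ : ℕ → Term F ar}
    (h : ∀ n ∈ t.vars, (σ n).Ground) : (t.subst σ).Ground := by
  induction t with
  | var n => exact h n (by simp [Term.vars])
  | app f ts ih =>
      refine S12.ground_app.2 (fun i => ih i (fun n hn => h n ?_))
      simp only [Term.vars, Finset.mem_biUnion]
      exact ⟨i, Finset.mem_univ i, hn⟩

/-! ### subtermAt / replaceAt -/

theorem S12.subtermAt_nil (t : Term F ar) : t.subtermAt [] = some t := by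
  cases t <;> rfl

theorem S12.replaceAt_nil (t b : Term F ar) : t.replaceAt [] b = some b := by
  cases t <;> rfl

theorem S12.subtermAt_append {t a c : Term F ar} {p p' : List ℕ}
    (h1 : t.subtermAt p = some a) (h2 : a.subtermAt p' = some c) :
    t.subtermAt (p ++ p') = some c := by
  induction p generalizing t with
  | nil => simp only [Term.subtermAt] at h1; cases h1; exact h2
  | cons i p ih =>
      cases t with
      | var n => simp [Term.subtermAt] at h1
      | app f ts =>
          simp only [List.cons_append, Term.subtermAt] at h1 ⊢
          split at h1
          · rename_i hlt
            rw [dif_pos hlt]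
            exact ih h1
          · exact absurd h1 (by simp)

theorem S12.ground_of_subtermAt {t a : Term F ar} {p : List ℕ}
    (hg : t.Ground) (h : t.subtermAt p = some a) : a.Ground := by
  induction p generalizing t with
  | nil => simp only [Term.subtermAt] at h; cases h; exact hg
  | cons i p ih =>
      cases t with
      | var n => simp [Term.subtermAt] at h
      | app f ts =>
          simp only [Term.subtermAt] at h
          split at h
          · exact ih (S12.ground_app.1 hg _) h
          · exact absurd h (by simp)

theorem S12.count_subtermAt_le {t a : Term F ar} {p : List ℕ}
    (h : t.subtermAt p = some a) (n : ℕ) : a.count n ≤ t.count n := by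
  induction p generalizing t with
  | nil => simp only [Term.subtermAt] at h; cases h; exact le_rfl
  | cons i p ih =>
      cases t with
      | var m => simp [Term.subtermAt] at h
      | app f ts =>
          simp only [Term.subtermAt] at h
          split at h
          · refine le_trans (ih h) ?_
            simp only [Term.count]
            exact Finset.single_le_sum (f := fun j => (ts j).count n)
              (fun j _ => Nat.zero_le _) (Finset.mem_univ _)
          · exact absurd h (by simp)

theorem S12.linear_of_subtermAt {t a : Term F ar} {p : List ℕ}
    (hl : t.Linear) (h : t.subtermAt p = some a) : a.Linear :=
  fun n => le_trans (S12.count_subtermAt_le h n) (hl n)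

theorem S12.exists_replaceAt {t a : Term F ar} {p : List ℕ}
    (h : t.subtermAt p = some a) (b : Term F ar) :
    ∃ t', t.replaceAt p b = some t' := by
  induction p generalizing t with
  | nil => exact ⟨b, S12.replaceAt_nil _ _⟩
  | cons i p ih =>
      cases t with
      | var n => simp [Term.subtermAt] at h
      | app f ts =>
          simp only [Term.subtermAt] at h
          simp only [Term.replaceAt]
          split at h
          · obtain ⟨t', ht'⟩ := ih h
            rename_i hlt
            refine ⟨Term.app f (Function.update ts ⟨i, hlt⟩ t'), ?_⟩
            rw [dif_pos hlt, ht']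
            rfl
          · exact absurd h (by simp)

theorem S12.ground_of_replaceAt {t b t' : Term F ar} {p : List ℕ}
    (hg : t.Ground) (hb : b.Ground) (h : t.replaceAt p b = some t') : t'.Ground := by
  induction p generalizing t t' with
  | nil => rw [S12.replaceAt_nil] at h; cases h; exact hb
  | cons i p ih =>
      cases t with
      | var n => simp [Term.replaceAt] at h
      | app f ts =>
          simp only [Term.replaceAt] at h
          split at h
          · rename_i hlt
            simp only [Option.map_eq_some_iff] at h
            obtain ⟨s, hs, rfl⟩ := h
            refine S12.ground_app.2 (fun j => ?_)
            rcases eq_or_ne j (⟨i, hlt⟩ : Fin (ar f)) with rfl | hne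
            · rw [Function.update_self]
              exact ih (S12.ground_app.1 hg _) hs
            · rw [Function.update_of_ne hne]
              exact S12.ground_app.1 hg j
          · exact absurd h (by simp)

theorem S12.subtermAt_subst {t a : Term F ar} {p : List ℕ} (σ : ℕ → Term F ar)
    (h : t.subtermAt p = some a) : (t.subst σ).subtermAt p = some (a.subst σ) := by
  induction p generalizing t with
  | nil => rw [S12.subtermAt_nil] at h; cases h; exact S12.subtermAt_nil _
  | cons i p ih =>
      cases t with
      | var n => simp [Term.subtermAt] at h
      | app f ts =>
          simp only [Term.subtermAt, Term.subst] at h ⊢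
          split at h
          · rename_i hlt
            rw [dif_pos hlt]
            exact ih h
          · exact absurd h (by simp)

theorem S12.replaceAt_subst {t b t' : Term F ar} {p : List ℕ} (σ : ℕ → Term F ar)
    (h : t.replaceAt p b = some t') :
    (t.subst σ).replaceAt p (b.subst σ) = some (t'.subst σ) := by
  induction p generalizing t t' with
  | nil => rw [S12.replaceAt_nil] at h; cases h; exact S12.replaceAt_nil _ _
  | cons i p ih =>
      cases t with
      | var n => simp [Term.replaceAt] at h
      | app f ts =>
          simp only [Term.replaceAt, Term.subst] at h ⊢
          split at h
          · rename_i hlt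
            rw [dif_pos hlt]
            simp only [Option.map_eq_some_iff] at h
            obtain ⟨s, hs, rfl⟩ := h
            rw [ih hs]
            simp only [Option.map_some, Option.some.injEq, Term.subst]
            congr 1
            funext j
            rcases eq_or_ne j (⟨i, hlt⟩ : Fin (ar f)) with rfl | hne
            · simp [Function.update_self]
            · simp [Function.update_of_ne hne]
          · exact absurd h (by simp)

end S12Terms
section S12Lift

open Term

variable {F : Type} {ar : F → ℕ}

theorem S12.liftB_app (f : F) (ts : Fin (ar f) → Term F ar) :
    liftB (Term.app f ts) = Term.app (some f) (fun i => liftB (ts i)) := rfl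

theorem S12.liftB_var (n : ℕ) : liftB (Term.var (F := F) (ar := ar) n) = Term.var n := rfl

theorem S12.vars_liftB (t : Term F ar) : (liftB t).vars = t.vars := by
  induction t with
  | var n => rfl
  | app f ts ih =>
      rw [S12.liftB_app]
      simp only [Term.vars]
      congr 1
      funext i
      exact ih i

theorem S12.ground_liftB {t : Term F ar} : (liftB t).Ground ↔ t.Ground := by
  unfold Term.Ground; rw [S12.vars_liftB]

theorem S12.count_liftB (t : Term F ar) (n : ℕ) : (liftB t).count n = t.count n := by
  induction t with
  | var m => rfl
  | app f ts ih =>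
      rw [S12.liftB_app]
      simp only [Term.count]
      exact Finset.sum_congr rfl (fun i _ => ih i)

theorem S12.linear_liftB {t : Term F ar} (h : t.Linear) : (liftB t).Linear := by
  intro n; rw [S12.count_liftB]; exact h n

theorem S12.liftB_subst (t : Term F ar) (σ : ℕ → Term F ar) :
    liftB (t.subst σ) = (liftB t).subst (fun n => liftB (σ n)) := by
  induction t with
  | var n => rfl
  | app f ts ih =>
      simp only [Term.subst, S12.liftB_app]
      congr 1
      funext i
      exact ih i

theorem S12.liftB_inj {s t : Term F ar} (h : liftB s = liftB t) : s = t := by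
  induction s generalizing t with
  | var n => cases t with
    | var m => simp only [S12.liftB_var, Term.var.injEq] at h ⊢; exact h
    | app g ts => rw [S12.liftB_var, S12.liftB_app] at h; exact absurd h (by simp)
  | app f ss ih =>
      cases t with
      | var m => rw [S12.liftB_var, S12.liftB_app] at h; exact absurd h (by simp)
      | app g ts =>
          rw [S12.liftB_app, S12.liftB_app] at h
          obtain ⟨hf, hts⟩ := Term.app.inj h
          cases Option.some.inj hf
          refine congrArg _ (funext fun i => ih i ?_)
          exact congrFun (eq_of_heq hts) i

theorem S12.subtermAt_liftB (t : Term F ar) (p : List ℕ) :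
    (liftB t).subtermAt p = (t.subtermAt p).map liftB := by
  induction p generalizing t with
  | nil => rw [S12.subtermAt_nil, S12.subtermAt_nil]; rfl
  | cons i p ih =>
      cases t with
      | var n => rfl
      | app f ts =>
          rw [S12.liftB_app]
          simp only [Term.subtermAt]
          split <;> split
          · exact ih (ts _)
          · rename_i h1 h2; exact absurd h1 h2
          · rename_i h1 h2; exact absurd h2 h1
          · rfl

theorem S12.replaceAt_liftB {t b t' : Term F ar} {p : List ℕ}
    (h : t.replaceAt p b = some t') :
    (liftB t).replaceAt p (liftB b) = some (liftB t') := by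
  induction p generalizing t t' with
  | nil => rw [S12.replaceAt_nil] at h; cases h; exact S12.replaceAt_nil _ _
  | cons i p ih =>
      cases t with
      | var n => simp [Term.replaceAt] at h
      | app f ts =>
          rw [S12.liftB_app]
          simp only [Term.replaceAt] at h ⊢
          split at h
          · rename_i hlt
            erw [dif_pos hlt]
            simp only [Option.map_eq_some_iff] at h
            obtain ⟨s, hs, rfl⟩ := h
            erw [ih hs]
            simp only [Option.map_some, Option.some.injEq, S12.liftB_app]
            congr 1
            funext j
            rcases eq_or_ne j (⟨i, hlt⟩ : Fin (ar f)) with rfl | hne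
            · erw [Function.update_self, Function.update_self]
            · erw [Function.update_of_ne hne, Function.update_of_ne hne]
          · exact absurd h (by simp)

/-! ### Combining substitutions -/

theorem S12.exists_fun {α : Type} (dflt : α) {n : ℕ} (ls : Fin n → Term F ar)
    (hdisj : ∀ m i j, m ∈ (ls i).vars → m ∈ (ls j).vars → i = j)
    (g : Fin n → ℕ → α) :
    ∃ h : ℕ → α, ∀ i, ∀ m ∈ (ls i).vars, h m = g i m := by
  classical
  refine ⟨fun m => if hc : ∃ i, m ∈ (ls i).vars then g hc.choose m else dflt, ?_⟩
  intro i m hm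
  have hc : ∃ j, m ∈ (ls j).vars := ⟨i, hm⟩
  dsimp only
  rw [dif_pos hc]
  rw [hdisj m hc.choose i hc.choose_spec hm]

theorem S12.combine_subst {n : ℕ} {ls : Fin n → Term F ar}
    (hdisj : ∀ m i j, m ∈ (ls i).vars → m ∈ (ls j).vars → i = j)
    {ws : Fin n → Term F ar} (h : ∀ i, ∃ σ, ws i = (ls i).subst σ) :
    ∃ σ, ∀ i, ws i = (ls i).subst σ := by
  choose σs hσs using h
  obtain ⟨σ, hσ⟩ := S12.exists_fun (Term.var 0) ls hdisj σs
  refine ⟨σ, fun i => ?_⟩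
  rw [hσs i]
  exact (S12.subst_congr (fun m hm => hσ i m hm)).symm

/-! ### Rewriting lemmas -/

theorem S12.rewrites_subst {Rr : Set (Term F ar × Term F ar)} {s t : Term F ar}
    (h : Rewrites Rr s t) (γ : ℕ → Term F ar) :
    Rewrites Rr (s.subst γ) (t.subst γ) := by
  obtain ⟨p, l, r, σ, hR, hsub, hrep⟩ := h
  refine ⟨p, l, r, fun n => (σ n).subst γ, hR, ?_, ?_⟩
  · rw [← S12.subst_subst]
    exact S12.subtermAt_subst γ hsub
  · rw [← S12.subst_subst]
    exact S12.replaceAt_subst γ hrep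

theorem S12.rewritesStar_subst {Rr : Set (Term F ar × Term F ar)} {s t : Term F ar}
    (h : RewritesStar Rr s t) (γ : ℕ → Term F ar) :
    RewritesStar Rr (s.subst γ) (t.subst γ) :=
  Relation.ReflTransGen.lift (fun u : Term F ar => u.subst γ) (fun _ _ hab => S12.rewrites_subst hab γ) _ _ h

theorem S12.rewrites_app {Rr : Set (Term F ar × Term F ar)} {f : F}
    {ts : Fin (ar f) → Term F ar} {i : Fin (ar f)} {t' : Term F ar}
    (h : Rewrites Rr (ts i) t') :
    Rewrites Rr (Term.app f ts) (Term.app f (Function.update ts i t')) := by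
  obtain ⟨p, l, r, σ, hR, hsub, hrep⟩ := h
  refine ⟨(i : ℕ) :: p, l, r, σ, hR, ?_, ?_⟩
  · simp only [Term.subtermAt]
    rw [dif_pos i.isLt, Fin.eta]
    exact hsub
  · simp only [Term.replaceAt]
    rw [dif_pos i.isLt, Fin.eta, hrep]
    rfl

theorem S12.rewritesStar_update {Rr : Set (Term F ar × Term F ar)} {f : F}
    {ts : Fin (ar f) → Term F ar} {i : Fin (ar f)} {t' : Term F ar}
    (h : RewritesStar Rr (ts i) t') :
    RewritesStar Rr (Term.app f ts) (Term.app f (Function.update ts i t')) := by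
  have key : ∀ u v, Rewrites Rr u v →
      Rewrites Rr (Term.app f (Function.update ts i u)) (Term.app f (Function.update ts i v)) := by
    intro u v huv
    have := S12.rewrites_app (Rr := Rr) (f := f) (ts := Function.update ts i u) (i := i)
      (t' := v) (by rw [Function.update_self]; exact huv)
    rwa [Function.update_idem] at this
  have := Relation.ReflTransGen.lift (fun u => Term.app f (Function.update ts i u))
    (fun a b hab => key a b hab) _ _ h
  dsimp only [Function.onFun] at this
  rwa [Function.update_eq_self] at this

theorem S12.rewritesStar_app_all {Rr : Set (Term F ar × Term F ar)} {f : F}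
    {ts ws : Fin (ar f) → Term F ar} (h : ∀ i, RewritesStar Rr (ts i) (ws i)) :
    RewritesStar Rr (Term.app f ts) (Term.app f ws) := by
  classical
  have aux : ∀ S : Finset (Fin (ar f)),
      RewritesStar Rr (Term.app f ts) (Term.app f (fun i => if i ∈ S then ws i else ts i)) := by
    intro S
    induction S using Finset.induction with
    | empty => exact Relation.ReflTransGen.refl
    | @insert j S hj ih =>
        refine ih.trans ?_
        have hts' : (fun i => if i ∈ insert j S then ws i else ts i)
            = Function.update (fun i => if i ∈ S then ws i else ts i) j (ws j) := by
          funext k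
          rcases eq_or_ne k j with rfl | hk
          · rw [Function.update_self, if_pos (Finset.mem_insert_self _ _)]
          · rw [Function.update_of_ne hk]
            simp [Finset.mem_insert, hk]
        rw [hts']
        exact S12.rewritesStar_update (by rw [if_neg hj]; exact h j)
  have := aux Finset.univ
  have huniv : (fun i => if i ∈ (Finset.univ : Finset (Fin (ar f))) then ws i else ts i) = ws := by
    funext k; rw [if_pos (Finset.mem_univ k)]
  rwa [huniv] at this

theorem S12.rewrites_root {Rr : Set (Term F ar × Term F ar)} {l r : Term F ar}
    (hR : (l, r) ∈ Rr) (hdisj : ∀ n ∈ r.vars, n ∉ l.vars)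
    (σ τ : ℕ → Term F ar) :
    Rewrites Rr (l.subst σ) (r.subst τ) := by
  classical
  refine ⟨[], l, r, fun n => if n ∈ l.vars then σ n else τ n, hR, ?_, ?_⟩
  · rw [S12.subtermAt_nil]
    congr 1
    exact (S12.subst_congr (fun n hn => by rw [if_pos hn])).symm
  · rw [S12.replaceAt_nil]
    congr 1
    exact (S12.subst_congr (fun n hn => by rw [if_neg (hdisj n hn)])).symm

end S12Lift
section S12Automata

open Term

variable {F : Type} {ar : F → ℕ} {Q : Type}

theorem S12.reaches_mono {Δ Δ' : Set (TARule F ar Q)} (hsub : Δ ⊆ Δ')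
    {t : Term F ar} {q : Q} (h : Reaches Δ t q) : Reaches Δ' t q := by
  induction h with
  | app hargs hrule ih => exact Reaches.app ih (hsub hrule)

theorem S12.reachesT_mono {Δ Δ' : Set (TARule F ar Q)} (hsub : Δ ⊆ Δ') {θ : ℕ → Q}
    {t : Term F ar} {q : Q} (h : ReachesT Δ θ t q) : ReachesT Δ' θ t q := by
  induction h with
  | var n => exact ReachesT.var n
  | app hargs hrule ih => exact ReachesT.app ih (hsub hrule)

theorem S12.ground_of_reaches {Δ : Set (TARule F ar Q)} {t : Term F ar} {q : Q}
    (h : Reaches Δ t q) : t.Ground := by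
  induction h with
  | app hargs hrule ih => exact S12.ground_app.2 ih

theorem S12.reachesT_of_reaches {Δ : Set (TARule F ar Q)} {θ : ℕ → Q}
    {t : Term F ar} {q : Q} (h : Reaches Δ t q) : ReachesT Δ θ t q := by
  induction h with
  | app hargs hrule ih => exact ReachesT.app ih hrule

theorem S12.reaches_of_reachesT {Δ : Set (TARule F ar Q)} {θ : ℕ → Q}
    {t : Term F ar} {q : Q} (h : ReachesT Δ θ t q) (hg : t.Ground) : Reaches Δ t q := by
  induction h with
  | var n => exact absurd hg (S12.ground_var n)
  | app hargs hrule ih =>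
      exact Reaches.app (fun i => ih i (S12.ground_app.1 hg i)) hrule

theorem S12.reachesT_congr {Δ : Set (TARule F ar Q)} {θ θ' : ℕ → Q}
    {t : Term F ar} {q : Q} (h : ReachesT Δ θ t q)
    (hc : ∀ n ∈ t.vars, θ n = θ' n) : ReachesT Δ θ' t q := by
  induction h with
  | var n =>
      rw [hc n (by simp [Term.vars])]
      exact ReachesT.var n
  | app hargs hrule ih =>
      refine ReachesT.app (fun i => ih i (fun n hn => hc n ?_)) hrule
      simp only [Term.vars, Finset.mem_biUnion]
      exact ⟨i, Finset.mem_univ i, hn⟩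

theorem S12.reaches_subst {Δ : Set (TARule F ar Q)} {θ : ℕ → Q} {σ : ℕ → Term F ar}
    {t : Term F ar} {q : Q} (h : ReachesT Δ θ t q)
    (hσ : ∀ n ∈ t.vars, Reaches Δ (σ n) (θ n)) : Reaches Δ (t.subst σ) q := by
  induction h with
  | var n => exact hσ n (by simp [Term.vars])
  | app hargs hrule ih =>
      refine Reaches.app (fun i => ih i (fun n hn => hσ n ?_)) hrule
      simp only [Term.vars, Finset.mem_biUnion]
      exact ⟨i, Finset.mem_univ i, hn⟩

theorem S12.reaches_decompose {Δ : Set (TARule F ar Q)} {σ : ℕ → Term F ar}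
    {t : Term F ar} {q : Q} (hlin : t.Linear) (h : Reaches Δ (t.subst σ) q) :
    ∃ θ : ℕ → Q, ReachesT Δ θ t q ∧ ∀ n ∈ t.vars, Reaches Δ (σ n) (θ n) := by
  induction t generalizing q with
  | var n =>
      exact ⟨fun _ => q, ReachesT.var n, fun m hm => by
        simp only [Term.vars, Finset.mem_singleton] at hm; cases hm; exact h⟩
  | app f ts ih =>
      rw [show (Term.app f ts).subst σ = Term.app f (fun i => (ts i).subst σ) from rfl] at h
      cases h with
      | app hargs hrule =>
          rename_i qs
          have hths : ∀ i, ∃ θ, ReachesT Δ θ (ts i) (qs i) ∧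
              ∀ n ∈ (ts i).vars, Reaches Δ (σ n) (θ n) :=
            fun i => ih i (S12.linear_arg hlin i) (hargs i)
          choose θs hθ1 hθ2 using hths
          obtain ⟨θ, hθ⟩ := S12.exists_fun (q) ts (fun m i j hi hj =>
            S12.linear_disjoint hlin hi hj) θs
          refine ⟨θ, ReachesT.app (fun i => S12.reachesT_congr (hθ1 i)
            (fun n hn => (hθ i n hn).symm)) hrule, ?_⟩
          intro n hn
          simp only [Term.vars, Finset.mem_biUnion] at hn
          obtain ⟨i, _, hn⟩ := hn
          rw [hθ i n hn]
          exact hθ2 i n hn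

theorem S12.dn_app {Δ : Set (TARule F ar Q)} {f : F} {ts : Fin (ar f) → Term F ar} :
    dn Δ (Term.app f ts) = oneStep Δ f (fun i => dn Δ (ts i)) := by
  ext q
  constructor
  · intro h
    cases h with
    | app hargs hrule => exact ⟨_, hargs, hrule⟩
  · rintro ⟨qs, hargs, hrule⟩
    exact Reaches.app hargs hrule

theorem S12.reaches_iUnion {Γ : ℕ → Set (TARule F ar Q)} (hmono : Monotone Γ)
    {t : Term F ar} {q : Q} (h : Reaches (⋃ n, Γ n) t q) : ∃ n, Reaches (Γ n) t q := by
  induction h with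
  | app hargs hrule ih =>
      rename_i f ts qs q
      obtain ⟨m, hm⟩ := Set.mem_iUnion.1 hrule
      choose ns hns using ih
      classical
      refine ⟨max m (Finset.univ.sup ns), Reaches.app (qs := qs) (fun i => ?_) ?_⟩
      · exact S12.reaches_mono (hmono (le_max_of_le_right
          (Finset.le_sup (Finset.mem_univ i)))) (hns i)
      · exact hmono (le_max_left _ _) hm

theorem S12.reachesT_iUnion {Γ : ℕ → Set (TARule F ar Q)} (hmono : Monotone Γ)
    {θ : ℕ → Q} {t : Term F ar} {q : Q} (h : ReachesT (⋃ n, Γ n) θ t q) :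
    ∃ n, ReachesT (Γ n) θ t q := by
  induction h with
  | var n => exact ⟨0, ReachesT.var n⟩
  | app hargs hrule ih =>
      rename_i f ts qs q
      obtain ⟨m, hm⟩ := Set.mem_iUnion.1 hrule
      choose ns hns using ih
      classical
      refine ⟨max m (Finset.univ.sup ns), ReachesT.app (qs := qs) (fun i => ?_) ?_⟩
      · exact S12.reachesT_mono (hmono (le_max_of_le_right
          (Finset.le_sup (Finset.mem_univ i)))) (hns i)
      · exact hmono (le_max_left _ _) hm

theorem S12.reaches_replace {Δ : Set (TARule F ar Q)} {p : List ℕ} :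
    ∀ {w a b w' : Term F ar} {q : Q}, w.subtermAt p = some a → w.replaceAt p b = some w' →
    (∀ q', Reaches Δ b q' → Reaches Δ a q') → Reaches Δ w' q → Reaches Δ w q := by
  induction p with
  | nil =>
      intro w a b w' q h1 h2 hab h
      rw [S12.subtermAt_nil] at h1
      rw [S12.replaceAt_nil] at h2
      cases h1; cases h2
      exact hab q h
  | cons i p ih =>
      intro w a b w' q h1 h2 hab h
      cases w with
      | var n => simp [Term.subtermAt] at h1
      | app f ts =>
          simp only [Term.subtermAt] at h1
          simp only [Term.replaceAt] at h2
          split at h1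
          · rename_i hlt
            rw [dif_pos hlt] at h2
            simp only [Option.map_eq_some_iff] at h2
            obtain ⟨s, hs, rfl⟩ := h2
            cases h with
            | app hargs hrule =>
                rename_i qs
                refine Reaches.app (fun j => ?_) hrule
                rcases eq_or_ne j (⟨i, hlt⟩ : Fin (ar f)) with rfl | hne
                · refine ih h1 hs hab ?_
                  have h' := hargs ⟨i, hlt⟩
                  rwa [Function.update_self] at h'
                · have h' := hargs j
                  rwa [Function.update_of_ne hne] at h'
          · exact absurd h1 (by simp)

end S12Automata
section S12Bullet

open Term

variable {F : Type} {ar : F → ℕ}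

/-- Bullet-freeness of a term over `𝓕 ∪ {•}`. -/
def S12.NoBul : Term (Option F) (arB ar) → Prop
  | Term.var _ => True
  | Term.app f ts => f ≠ none ∧ ∀ i, S12.NoBul (ts i)

theorem S12.noBul_liftB (t : Term F ar) : S12.NoBul (liftB t) := by
  induction t with
  | var n => trivial
  | app f ts ih =>
      rw [S12.liftB_app]
      exact ⟨Option.some_ne_none f, fun i => ih i⟩

theorem S12.noBul_subterm {t a : Term (Option F) (arB ar)} {p : List ℕ}
    (h : S12.NoBul t) (hsub : t.subtermAt p = some a) : S12.NoBul a := by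
  induction p generalizing t with
  | nil => rw [S12.subtermAt_nil] at hsub; cases hsub; exact h
  | cons i p ih =>
      cases t with
      | var n => simp [Term.subtermAt] at hsub
      | app f ts =>
          simp only [Term.subtermAt] at hsub
          split at hsub
          · exact ih (h.2 _) hsub
          · exact absurd hsub (by simp)

theorem S12.bullet_ground : (bulletTm (F := F) (ar := ar)).Ground :=
  S12.ground_app.2 (fun i => i.elim0)

theorem S12.subst_bullet (σ : ℕ → Term (Option F) (arB ar)) :
    (bulletTm (F := F) (ar := ar)).subst σ = bulletTm := by
  show Term.app none _ = Term.app none _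
  congr 1
  funext i
  exact i.elim0

theorem S12.app_none_eq_bullet (ts : Fin (arB ar none) → Term (Option F) (arB ar)) :
    Term.app (none : Option F) ts = bulletTm := by
  show _ = Term.app none _
  congr 1
  funext i
  exact i.elim0

theorem S12.exists_bullet_pos {t : Term (Option F) (arB ar)} (h : ¬ S12.NoBul t) :
    ∃ p, t.subtermAt p = some bulletTm := by
  induction t with
  | var n => exact absurd trivial h
  | app f ts ih =>
      by_cases hf : f = none
      · subst hf
        exact ⟨[], by rw [S12.subtermAt_nil, S12.app_none_eq_bullet]⟩
      · have : ¬ ∀ i, S12.NoBul (ts i) := fun hall => h ⟨hf, hall⟩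
        push_neg at this
        obtain ⟨i, hi⟩ := this
        obtain ⟨p, hp⟩ := ih i hi
        refine ⟨(i : ℕ) :: p, ?_⟩
        simp only [Term.subtermAt]
        rw [dif_pos i.isLt, Fin.eta]
        exact hp

end S12Bullet

section S12Setup

open Term

variable {F : Type} {ar : F → ℕ} (R Rg : TRS F ar)

theorem S12.bullet_isRedex : (TRS.bullet R).IsRedex bulletTm :=
  ⟨(bulletTm, bulletTm), Set.mem_union_right _ rfl, Term.var, (S12.subst_bullet _).symm⟩

theorem S12.NF_noBul {t : Term (Option F) (arB ar)} (h : t ∈ TRS.NFset R.bullet) :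
    S12.NoBul t := by
  by_contra hn
  obtain ⟨p, hp⟩ := S12.exists_bullet_pos hn
  exact h.2 ⟨p, bulletTm, hp, S12.bullet_isRedex R⟩

theorem S12.bullet_not_NF : bulletTm ∉ TRS.NFset R.bullet := fun h =>
  h.2 ⟨[], bulletTm, S12.subtermAt_nil _, S12.bullet_isRedex R⟩

/-- Shape of the rules of the lifted TRS `Rg.liftB`. -/
theorem S12.Rb_lhs_app {lr : Term (Option F) (arB ar) × Term (Option F) (arB ar)}
    (h : lr ∈ Rg.liftB.rules) :
    ∃ (g : Option F) (ls : Fin (arB ar g) → Term (Option F) (arB ar)),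
      lr.1 = Term.app g ls ∧ g ≠ none := by
  obtain ⟨lr0, h0, rfl⟩ := h
  cases h1 : lr0.1 with
  | var m => exact absurd h1 (Rg.lhs_not_var lr0 h0 m)
  | app f ts =>
      refine ⟨some f, fun i => liftB (ts i), ?_, Option.some_ne_none f⟩
      show liftB lr0.1 = _
      rw [h1, S12.liftB_app]

end S12Setup

section S12SRGeneric

open Term

variable {F : Type} {ar : F → ℕ} {S : TRS F ar}

theorem S12.lhsarg_SR {g : F} {ls : Fin (ar g) → Term F ar}
    {r : Term F ar} (h : (Term.app g ls, r) ∈ S.rules)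
    (i : Fin (ar g)) : ls i ∈ SR S :=
  ⟨(Term.app g ls, r), h, g, ls, rfl, i, [], S12.subtermAt_nil _⟩

theorem S12.SR_arg {g : F} {bs : Fin (ar g) → Term F ar}
    (h : Term.app g bs ∈ SR S) (i : Fin (ar g)) : bs i ∈ SR S := by
  obtain ⟨lr, hlr, f, ts, hl, j, p, hp⟩ := h
  refine ⟨lr, hlr, f, ts, hl, j, p ++ [(i : ℕ)], S12.subtermAt_append hp ?_⟩
  simp only [Term.subtermAt]
  rw [dif_pos i.isLt]

theorem S12.stPat_mem {b : Term F ar} (h : b ∈ SR S) :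
    stPattern b ∈ BStateSet S :=
  Set.mem_union_left _ (Set.mem_image_of_mem _ h)

theorem S12.var0_mem : (Term.var 0 : Term F ar) ∈ BStateSet S :=
  Set.mem_union_right _ rfl

theorem S12.stPat_ne_var0 {g : F} {bs : Fin (ar g) → Term F ar} :
    Term.app g bs ≠ Term.var 0 := fun h => by cases h

/-- Every ground term reaches a state `qx` for which all propagation rules exist. -/
theorem S12.reaches_allx {Q : Type} {Δ : Set (TARule F ar Q)} {qx : Q}
    (hp : ∀ f : F, (⟨f, fun _ => qx, qx⟩ : TARule F ar Q) ∈ Δ)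
    {w : Term F ar} (hg : w.Ground) : Reaches Δ w qx := by
  induction w with
  | var n => exact absurd hg (S12.ground_var n)
  | app f ts ih =>
      exact Reaches.app (fun i => ih i (S12.ground_app.1 hg i)) (hp f)

/-- Ground instances of patterns reach the corresponding pattern states. -/
theorem S12.reaches_inst {Q : Type} {Δ : Set (TARule F ar Q)} {enc' : Term F ar → Q}
    (hmatch : BMatch S enc' ⊆ Δ)
    (hx : ∀ w : Term F ar, w.Ground → Reaches Δ w (enc' (Term.var 0))) :
    ∀ {b : Term F ar}, b ∈ SR S → ∀ {σ : ℕ → Term F ar}, (b.subst σ).Ground →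
      Reaches Δ (b.subst σ) (enc' (stPattern b)) := by
  intro b
  induction b with
  | var n => exact fun _ _ hg => hx _ hg
  | app f bs ih =>
      intro hb σ hg
      rw [show (Term.app f bs).subst σ = Term.app f (fun i => (bs i).subst σ) from rfl] at hg ⊢
      refine Reaches.app (qs := fun i => enc' (stPattern (bs i))) (fun i => ?_)
        (hmatch ⟨f, bs, hb, rfl⟩)
      exact ih i (S12.SR_arg hb i) (S12.ground_app.1 hg i)

theorem S12.SR_stPat_inst {b : Term F ar} {w : Term F ar}
    (h : ∃ σ, w = (stPattern b).subst σ) : ∃ σ, w = b.subst σ := by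
  cases b with
  | var n => exact ⟨fun _ => w, rfl⟩
  | app f bs => exact h

end S12SRGeneric

section S12Approx

open Term

variable {F : Type} {ar : F → ℕ} {R Rg : TRS F ar}

theorem S12.vars_varRepl {s t : Term F ar} (h : VarRepl s t) :
    ∀ n, n ∈ t.vars → ∃ m, m ∈ s.vars := by
  induction h with
  | var n m => exact fun k _ => ⟨n, by simp [Term.vars]⟩
  | app f ts ts' hvr ih =>
      intro k hk
      simp only [Term.vars, Finset.mem_biUnion] at hk ⊢
      obtain ⟨i, _, hk⟩ := hk
      obtain ⟨m, hm⟩ := ih i k hk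
      exact ⟨m, i, Finset.mem_univ i, hm⟩

theorem S12.Rb_leftLinear (hll : R.LeftLinear) (happrox : IsGrowingApprox R Rg) :
    Rg.liftB.LeftLinear := by
  rintro lr ⟨lr0, h0, rfl⟩
  obtain ⟨lr', hlr', heq, _, _⟩ := happrox.2.2.1 lr0 h0
  exact S12.linear_liftB (heq ▸ hll lr' hlr')

theorem S12.Rb_rightLinear (happrox : IsGrowingApprox R Rg) : Rg.liftB.RightLinear := by
  rintro lr ⟨lr0, h0, rfl⟩
  exact S12.linear_liftB (happrox.1 lr0 h0)

theorem S12.Rb_disj (happrox : IsGrowingApprox R Rg) :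
    ∀ lr ∈ Rg.liftB.rules, ∀ n ∈ lr.2.vars, n ∉ lr.1.vars := by
  rintro lr ⟨lr0, h0, rfl⟩ n hn hn'
  obtain ⟨lr', hlr', heq, _, hdisj⟩ := happrox.2.2.1 lr0 h0
  simp only at hn hn'
  have hn2 : n ∈ (liftB lr0.2).vars := hn
  have hn2' : n ∈ (liftB lr0.1).vars := hn'
  rw [S12.vars_liftB] at hn2 hn2'
  exact hdisj n hn2 hn2'

theorem S12.SR_noBul {b : Term (Option F) (arB ar)} (h : b ∈ SR Rg.liftB) :
    S12.NoBul b := by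
  obtain ⟨lr, hlr, f, ts, hl, j, p, hp⟩ := h
  obtain ⟨lr0, h0, rfl⟩ := hlr
  have h1 : S12.NoBul (Term.app f ts) := by
    rw [← hl]
    cases h2 : lr0.1 with
    | var m => exact absurd h2 (Rg.lhs_not_var lr0 h0 m)
    | app g ss => show S12.NoBul (liftB lr0.1); exact S12.noBul_liftB _
  exact S12.noBul_subterm (h1.2 j) hp

theorem S12.SR_linear (hll : R.LeftLinear) (happrox : IsGrowingApprox R Rg)
    {b : Term (Option F) (arB ar)} (h : b ∈ SR Rg.liftB) : b.Linear := by
  obtain ⟨lr, hlr, f, ts, hl, j, p, hp⟩ := h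
  have h1 : lr.1.Linear := S12.Rb_leftLinear hll happrox lr hlr
  rw [hl] at h1
  exact S12.linear_of_subtermAt (S12.linear_arg h1 j) hp

/-- Unlifting instances of linear patterns. -/
theorem S12.unlift_inst : ∀ {l : Term F ar}, l.Linear → ∀ {u : Term F ar}
    {σ' : ℕ → Term (Option F) (arB ar)}, liftB u = (liftB l).subst σ' →
    ∃ σ, u = l.subst σ := by
  intro l
  induction l with
  | var n => exact fun _ {u} _ _ => ⟨fun _ => u, rfl⟩
  | app f ls ih =>
      intro hlin u σ' h
      cases u with
      | var m => rw [S12.liftB_var, S12.liftB_app] at h; exact absurd h (by simp [Term.subst])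
      | app g us =>
          rw [S12.liftB_app, S12.liftB_app] at h
          rw [show (Term.app (some f) fun i => liftB (ls i)).subst σ'
            = Term.app (some f) (fun i => (liftB (ls i)).subst σ') from rfl] at h
          obtain ⟨hfg, hts⟩ := Term.app.inj h
          cases Option.some.inj hfg
          have hts := eq_of_heq hts
          have hinst : ∀ i, ∃ σ, us i = (ls i).subst σ := by
            intro i
            exact ih i (S12.linear_arg hlin i) (congrFun hts i)
          obtain ⟨σ, hσ⟩ := S12.combine_subst
            (fun m i j hi hj => S12.linear_disjoint hlin hi hj) hinst
          refine ⟨σ, ?_⟩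
          show Term.app f us = Term.app f (fun i => (ls i).subst σ)
          exact congrArg _ (funext hσ)

theorem S12.isRedex_liftB_iff (hll : R.LeftLinear) (happrox : IsGrowingApprox R Rg)
    {u : Term F ar} : Rg.liftB.IsRedex (liftB u) ↔ Rg.IsRedex u := by
  constructor
  · rintro ⟨lr, ⟨lr0, h0, rfl⟩, σ', hσ'⟩
    have hlin : lr0.1.Linear := by
      obtain ⟨lr', hlr', heq, _, _⟩ := happrox.2.2.1 lr0 h0
      exact heq ▸ hll lr' hlr'
    obtain ⟨σ, hσ⟩ := S12.unlift_inst hlin hσ'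
    exact ⟨lr0, h0, σ, hσ⟩
  · rintro ⟨lr, h0, σ, rfl⟩
    refine ⟨(liftB lr.1, liftB lr.2), ⟨lr, h0, rfl⟩, fun n => liftB (σ n), ?_⟩
    exact S12.liftB_subst _ _

theorem S12.isRedex_R_iff_Rg (happrox : IsGrowingApprox R Rg) {u : Term F ar} :
    R.IsRedex u ↔ Rg.IsRedex u := by
  constructor
  · rintro ⟨lr, h0, σ, rfl⟩
    obtain ⟨lr', hlr', heq, _, _⟩ := happrox.2.2.2 lr h0
    exact ⟨lr', hlr', σ, by rw [heq]⟩
  · rintro ⟨lr, h0, σ, rfl⟩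
    obtain ⟨lr', hlr', heq, _, _⟩ := happrox.2.2.1 lr h0
    exact ⟨lr', hlr', σ, by rw [heq]⟩

theorem S12.redexPos_liftB_iff (hll : R.LeftLinear) (happrox : IsGrowingApprox R Rg)
    {s : Term F ar} {p : List ℕ} :
    Rg.liftB.RedexPos (liftB s) p ↔ R.RedexPos s p := by
  constructor
  · rintro ⟨u, hsub, hred⟩
    rw [S12.subtermAt_liftB] at hsub
    obtain ⟨u0, hu0, rfl⟩ := Option.map_eq_some_iff.1 hsub
    exact ⟨u0, hu0, (S12.isRedex_R_iff_Rg happrox).2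
      ((S12.isRedex_liftB_iff hll happrox).1 hred)⟩
  · rintro ⟨u, hsub, hred⟩
    refine ⟨liftB u, ?_, (S12.isRedex_liftB_iff hll happrox).2
      ((S12.isRedex_R_iff_Rg happrox).1 hred)⟩
    rw [S12.subtermAt_liftB, hsub]
    rfl

theorem S12.bullet_no_rewrite (happrox : IsGrowingApprox R Rg)
    {t : Term (Option F) (arB ar)} (h : Rewrites Rg.liftB.rules bulletTm t) : False := by
  obtain ⟨p, l, r, σ, hR, hsub, hrep⟩ := h
  obtain ⟨g, ls, hl, hg⟩ := S12.Rb_lhs_app Rg hR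
  simp only at hl
  cases p with
  | nil =>
      rw [S12.subtermAt_nil] at hsub
      have hlb : l.subst σ = bulletTm := (Option.some.inj hsub).symm
      rw [hl] at hlb
      obtain ⟨hgn, _⟩ := Term.app.inj hlb
      exact hg hgn
  | cons i p =>
      simp [bulletTm, Term.subtermAt, arB] at hsub

theorem S12.bullet_star (happrox : IsGrowingApprox R Rg)
    {t : Term (Option F) (arB ar)} (h : RewritesStar Rg.liftB.rules bulletTm t) :
    t = bulletTm := by
  rcases Relation.ReflTransGen.cases_head h with rfl | ⟨c, hc, _⟩
  · rfl
  · exact absurd hc (fun hh => S12.bullet_no_rewrite happrox hh)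

end S12Approx
section S12Core

open Term

variable {F : Type} [Fintype F] {ar : F → ℕ} {Q : Type} [Fintype Q]
  {R Rg : TRS F ar}

/-- The restriction of the saturated automaton in which `•` may only go to `⟨x⟩`. -/
def S12.Gx (C : CpSetup Q Rg.liftB (TRS.NFset R.bullet)) :
    Set (TARule (Option F) (arB ar) Q) :=
  {ρ | ρ ∈ C.toCSetup.Γsat ∧ (ρ.1 = none → ρ.2.2 = C.enc (Term.var 0))}

variable (C : CpSetup Q Rg.liftB (TRS.NFset R.bullet))

theorem S12.Qstates_eq :
    C.toCSetup.Qstates = C.QA ∪ C.enc '' BStateSet Rg.liftB := rfl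

theorem S12.Γsat_eq :
    C.toCSetup.Γsat = ⋃ n, (satStep Rg.liftB C.enc C.toCSetup.Qstates)^[n] C.toCSetup.Γ0 := rfl

theorem S12.Γn_mono :
    Monotone (fun n => (satStep Rg.liftB C.enc C.toCSetup.Qstates)^[n] C.toCSetup.Γ0) := by
  refine monotone_nat_of_le_succ (fun n => ?_)
  rw [Function.iterate_succ_apply']
  exact Set.subset_union_left

theorem S12.Γn_sub_Γsat (n : ℕ) :
    (satStep Rg.liftB C.enc C.toCSetup.Qstates)^[n] C.toCSetup.Γ0 ⊆ C.toCSetup.Γsat := by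
  rw [S12.Γsat_eq]
  exact Set.subset_iUnion (fun n => (satStep Rg.liftB C.enc C.toCSetup.Qstates)^[n] C.toCSetup.Γ0) n

theorem S12.Γ0_sub_Γsat : C.toCSetup.Γ0 ⊆ C.toCSetup.Γsat :=
  S12.Γn_sub_Γsat C 0

theorem S12.A_sub_Γ0 : C.A.trans ⊆ C.toCSetup.Γ0 := Set.subset_union_left

theorem S12.BTrans_sub_Γ0 : BTrans Rg.liftB C.enc ⊆ C.toCSetup.Γ0 := Set.subset_union_right

theorem S12.BProp_sub_BTrans : BProp (Q := Q) (C.enc) ⊆ BTrans Rg.liftB C.enc :=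
  Set.subset_union_right

theorem S12.BMatch_sub_BTrans : BMatch Rg.liftB C.enc ⊆ BTrans Rg.liftB C.enc :=
  Set.subset_union_left

theorem S12.Γsat_sub_Γ' : C.toCSetup.Γsat ⊆ C.Γ' := fun ρ h =>
  Or.inl (Or.inl (Or.inl h))

theorem S12.BMatch2_sub_Γ' : BMatch Rg.liftB C.enc2 ⊆ C.Γ' := fun ρ h =>
  Or.inl (Or.inl (Or.inr h))

theorem S12.RedexRules_sub_Γ' : RedexRules Rg.liftB C.enc2 C.qr ⊆ C.Γ' := fun ρ h =>
  Or.inl (Or.inr h)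

theorem S12.QrProp_sub_Γ' : QrProp C.enc C.qr ⊆ C.Γ' := fun ρ h => Or.inr h

theorem S12.Gx_sub_Γsat : S12.Gx C ⊆ C.toCSetup.Γsat := fun ρ h => h.1

theorem S12.BProp_sub_Gx : BProp (Q := Q) (C.enc) ⊆ S12.Gx C := by
  rintro ρ ⟨f, rfl⟩
  exact ⟨S12.Γ0_sub_Γsat C (S12.BTrans_sub_Γ0 C (S12.BProp_sub_BTrans C ⟨f, rfl⟩)), fun _ => rfl⟩

theorem S12.BMatch_sub_Gx : BMatch Rg.liftB C.enc ⊆ S12.Gx C := by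
  rintro ρ ⟨f, ts, hSR, rfl⟩
  refine ⟨S12.Γ0_sub_Γsat C (S12.BTrans_sub_Γ0 C (S12.BMatch_sub_BTrans C ⟨f, ts, hSR, rfl⟩)),
    fun hnone => ?_⟩
  exact absurd hnone (S12.SR_noBul hSR).1

theorem S12.BProp_mem (f : Option F) :
    (⟨f, fun _ => C.enc (Term.var 0), C.enc (Term.var 0)⟩ : TARule (Option F) (arB ar) Q)
      ∈ BProp (Q := Q) C.enc := ⟨f, rfl⟩

theorem S12.tarule_target {F' : Type} {ar' : F' → ℕ} {f g : F'} {qs : Fin (ar' f) → Q}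
    {ds : Fin (ar' g) → Q} {q d : Q}
    (h : (⟨f, (qs, q)⟩ : TARule F' ar' Q) = ⟨g, (ds, d)⟩) : q = d := by
  obtain ⟨h1, h2⟩ := Sigma.mk.inj_iff.1 h
  subst h1
  exact congrArg Prod.snd (eq_of_heq h2)

/-- All ground terms reach `⟨x⟩` in the various automata. -/
theorem S12.allx_BTrans {w : Term (Option F) (arB ar)} (hg : w.Ground) :
    Reaches (BTrans Rg.liftB C.enc) w (C.enc (Term.var 0)) :=
  S12.reaches_allx (fun f => Set.mem_union_right _ (S12.BProp_mem C f)) hg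

theorem S12.allx_Gx {w : Term (Option F) (arB ar)} (hg : w.Ground) :
    Reaches (S12.Gx C) w (C.enc (Term.var 0)) :=
  S12.reaches_allx (fun f => S12.BProp_sub_Gx C (S12.BProp_mem C f)) hg

theorem S12.allx_Γ' {w : Term (Option F) (arB ar)} (hg : w.Ground) :
    Reaches C.Γ' w (C.enc (Term.var 0)) :=
  S12.reaches_mono (fun ρ h => S12.Γsat_sub_Γ' C (S12.Gx_sub_Γsat C h)) (S12.allx_Gx C hg)

/-- Targets of `ReachesT` lie in any set closed under rule targets / variable states. -/
theorem S12.reachesT_state {F' : Type} {ar' : F' → ℕ} {Γ : Set (TARule F' ar' Q)}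
    {θ : ℕ → Q} {t : Term F' ar'} {q : Q} {S : Set Q} (h : ReachesT Γ θ t q)
    (hrules : ∀ ρ ∈ Γ, ρ.2.2 ∈ S) (hθ : ∀ n ∈ t.vars, θ n ∈ S) : q ∈ S := by
  cases h with
  | var n => exact hθ n (by simp [Term.vars])
  | app hargs hrule => exact hrules _ hrule

theorem S12.BTrans_states : ∀ ρ ∈ BTrans Rg.liftB C.enc,
    ρ.2.2 ∈ C.enc '' BStateSet Rg.liftB ∧
      ∀ i, ρ.2.1 i ∈ C.enc '' BStateSet Rg.liftB := by
  rintro ρ (⟨f, ts, hSR, rfl⟩ | ⟨f, rfl⟩)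
  · exact ⟨Set.mem_image_of_mem _ (S12.stPat_mem hSR),
      fun i => Set.mem_image_of_mem _ (S12.stPat_mem (S12.SR_arg hSR i))⟩
  · exact ⟨Set.mem_image_of_mem _ S12.var0_mem, fun i => Set.mem_image_of_mem _ S12.var0_mem⟩

theorem S12.satArg_mem {rv : Finset ℕ} {θ : ℕ → Q}
    (hθ : ∀ n ∈ rv, θ n ∈ C.toCSetup.Qstates) {b : Term (Option F) (arB ar)}
    (hb : b ∈ SR Rg.liftB) : satArg C.enc θ rv b ∈ C.toCSetup.Qstates := by
  cases b with
  | var n =>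
      show (if n ∈ rv then θ n else C.enc (Term.var 0)) ∈ _
      split
      · exact hθ n (by assumption)
      · exact Set.mem_union_right _ (Set.mem_image_of_mem _ S12.var0_mem)
  | app g bs =>
      exact Set.mem_union_right _ (Set.mem_image_of_mem _ (S12.stPat_mem hb))

theorem S12.Γn_states : ∀ n, ∀ ρ ∈ (satStep Rg.liftB C.enc C.toCSetup.Qstates)^[n] C.toCSetup.Γ0,
    ρ.2.2 ∈ C.toCSetup.Qstates ∧ ∀ i, ρ.2.1 i ∈ C.toCSetup.Qstates := by
  intro n
  induction n with
  | zero =>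
      rintro ρ (hA | hB)
      · obtain ⟨h1, h2⟩ := C.hAstates ρ hA
        exact ⟨Set.mem_union_left _ h1, fun i => Set.mem_union_left _ (h2 i)⟩
      · obtain ⟨h1, h2⟩ := S12.BTrans_states C ρ hB
        exact ⟨Set.mem_union_right _ h1, fun i => Set.mem_union_right _ (h2 i)⟩
  | succ n ih =>
      rw [Function.iterate_succ_apply']
      rintro ρ (hprev | ⟨f, ls, r, θ, q, hR, hθ, hreach, rfl⟩)
      · exact ih ρ hprev
      · constructor
        · exact S12.reachesT_state hreach (fun ρ' h' => (ih ρ' h').1) hθ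
        · exact fun i => S12.satArg_mem C hθ (S12.lhsarg_SR hR i)

theorem S12.Γsat_states : ∀ ρ ∈ C.toCSetup.Γsat,
    ρ.2.2 ∈ C.toCSetup.Qstates ∧ ∀ i, ρ.2.1 i ∈ C.toCSetup.Qstates := by
  intro ρ h
  rw [S12.Γsat_eq, Set.mem_iUnion] at h
  obtain ⟨n, hn⟩ := h
  exact S12.Γn_states C n ρ hn

theorem S12.reaches_Γsat_state {t : Term (Option F) (arB ar)} {q : Q}
    (h : Reaches C.toCSetup.Γsat t q) : q ∈ C.toCSetup.Qstates := by
  cases h with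
  | app hargs hrule => exact (S12.Γsat_states C _ hrule).1

theorem S12.qr_not_Qstates : C.qr ∉ C.toCSetup.Qstates := fun h =>
  Set.eq_empty_iff_forall_notMem.1 C.hfresh C.qr ⟨Set.mem_union_right _ rfl, h⟩

theorem S12.enc2_not_Qstates {b : Term (Option F) (arB ar)} (hb : b ∈ BStateSet Rg.liftB)
    (hne : b ≠ Term.var 0) : C.enc2 b ∉ C.toCSetup.Qstates := fun h =>
  Set.eq_empty_iff_forall_notMem.1 C.hfresh (C.enc2 b)
    ⟨Set.mem_union_left _ (Set.mem_image_of_mem _ ⟨hb, hne⟩), h⟩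

theorem S12.qr_ne_enc2 {b : Term (Option F) (arB ar)} (hb : b ∈ BStateSet Rg.liftB)
    (hne : b ≠ Term.var 0) : C.qr ≠ C.enc2 b := fun h =>
  C.hqr (h ▸ Set.mem_image_of_mem _ (⟨hb, hne⟩ : b ∈ BStateSet Rg.liftB \ {Term.var 0}))

/-- Lemma E: `Γ'`-derivations into saturated states are `Γsat`-derivations. -/
theorem S12.Γ'_to_Γsat {t : Term (Option F) (arB ar)} {q : Q}
    (h : Reaches C.Γ' t q) (hq : q ∈ C.toCSetup.Qstates) :
    Reaches C.toCSetup.Γsat t q := by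
  induction h with
  | app hargs hrule ih =>
      rename_i f ts qs q
      rcases hrule with ((hsat | hm2) | hrr) | hqp
      · exact Reaches.app (fun i => ih i ((S12.Γsat_states C _ hsat).2 i)) hsat
      · obtain ⟨g, ts', hSR, heq⟩ := hm2
        have hq2 := S12.tarule_target heq
        exact absurd hq (hq2 ▸ S12.enc2_not_Qstates C (S12.stPat_mem hSR) S12.stPat_ne_var0)
      · obtain ⟨g, ls, r, hR, heq⟩ := hrr
        have hq2 := S12.tarule_target heq
        exact absurd hq (hq2 ▸ S12.qr_not_Qstates C)
      · obtain ⟨g, j, heq⟩ := hqp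
        have hq2 := S12.tarule_target heq
        exact absurd hq (hq2 ▸ S12.qr_not_Qstates C)

end S12Core
section S12Core2

open Term

variable {F : Type} [Fintype F] {ar : F → ℕ} {Q : Type} [Fintype Q]
  {R Rg : TRS F ar} (C : CpSetup Q Rg.liftB (TRS.NFset R.bullet))

theorem S12.stPat_cases (t : Term (Option F) (arB ar)) :
    (∃ n, t = Term.var n) ∨ (stPattern t = t ∧ t ≠ Term.var 0) := by
  cases t with
  | var n => exact Or.inl ⟨n, rfl⟩
  | app f ts => exact Or.inr ⟨rfl, fun h => by cases h⟩

theorem S12.btrans_char (hll : R.LeftLinear) (happrox : IsGrowingApprox R Rg)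
    {w : Term (Option F) (arB ar)} {q : Q}
    (h : Reaches (BTrans Rg.liftB C.enc) w q) :
    ∀ b ∈ BStateSet Rg.liftB, q = C.enc b → ∃ σ, w = b.subst σ := by
  induction h with
  | app hargs hrule ih =>
      rename_i f ts qs q
      intro b hb hq
      rcases hrule with ⟨g, ts', hSR, heq⟩ | ⟨g, heq⟩
      · obtain ⟨h1, h2⟩ := Sigma.mk.inj_iff.1 heq
        subst h1
        obtain ⟨hqs, hq'⟩ := Prod.mk.inj (eq_of_heq h2)
        have hb2 : b = Term.app f ts' :=
          C.henc hb (S12.stPat_mem hSR) (hq ▸ hq')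
        subst hb2
        have hinst : ∀ i, ∃ σ, ts i = (ts' i).subst σ := by
          intro i
          refine S12.SR_stPat_inst ?_
          exact ih i (stPattern (ts' i)) (S12.stPat_mem (S12.SR_arg hSR i))
            (congrFun hqs i)
        obtain ⟨σ, hσ⟩ := S12.combine_subst (fun m i j hi hj =>
          S12.linear_disjoint (S12.SR_linear hll happrox hSR) hi hj) hinst
        refine ⟨σ, ?_⟩
        show Term.app f ts = Term.app f (fun i => (ts' i).subst σ)
        exact congrArg _ (funext hσ)
      · have hq' := S12.tarule_target heq
        have hb2 : b = Term.var 0 := C.henc hb S12.var0_mem (hq ▸ hq')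
        subst hb2
        exact ⟨fun _ => Term.app f ts, rfl⟩

/-- Lemma F: separation of `Γ0`-derivations. -/
theorem S12.Γ0_sep {w : Term (Option F) (arB ar)} {q : Q} (h : Reaches C.toCSetup.Γ0 w q) :
    (q ∈ C.QA → Reaches C.A.trans w q) ∧
    (q ∈ C.enc '' BStateSet Rg.liftB → Reaches (BTrans Rg.liftB C.enc) w q) := by
  induction h with
  | app hargs hrule ih =>
      rename_i f ts qs q
      rcases hrule with hA | hB
      · have hAr : Reaches C.A.trans (Term.app f ts) q :=
          Reaches.app (fun i => (ih i).1 ((C.hAstates _ hA).2 i)) hA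
        refine ⟨fun _ => hAr, fun hq => ?_⟩
        exact (C.hshared q ⟨(C.hAstates _ hA).1, hq⟩ _).1 hAr
      · have hBr : Reaches (BTrans Rg.liftB C.enc) (Term.app f ts) q :=
          Reaches.app (fun i => (ih i).2 ((S12.BTrans_states C _ hB).2 i)) hB
        refine ⟨fun hq => ?_, fun _ => hBr⟩
        exact (C.hshared q ⟨hq, (S12.BTrans_states C _ hB).1⟩ _).2 hBr

/-- Characterization of the `⟪t⟫` states of `Γ'`. -/
theorem S12.Γ'_enc2_char (hll : R.LeftLinear) (happrox : IsGrowingApprox R Rg)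
    {w : Term (Option F) (arB ar)} {q : Q} (h : Reaches C.Γ' w q) :
    ∀ b ∈ BStateSet Rg.liftB, b ≠ Term.var 0 → q = C.enc2 b → ∃ σ, w = b.subst σ := by
  induction h with
  | app hargs hrule ih =>
      rename_i f ts qs q
      intro b hb hbne hq
      rcases hrule with ((hsat | hm2) | hrr) | hqp
      · exact absurd (S12.Γsat_states C _ hsat).1 (hq ▸ S12.enc2_not_Qstates C hb hbne)
      · obtain ⟨g, ts', hSR, heq⟩ := hm2
        obtain ⟨h1, h2⟩ := Sigma.mk.inj_iff.1 heq
        subst h1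
        obtain ⟨hqs, hq'⟩ := Prod.mk.inj (eq_of_heq h2)
        have hb2 : b = Term.app f ts' :=
          C.henc2 hb (S12.stPat_mem hSR) (hq ▸ hq')
        subst hb2
        have hinst : ∀ i, ∃ σ, ts i = (ts' i).subst σ := by
          intro i
          rcases S12.stPat_cases (ts' i) with ⟨n, hn⟩ | ⟨hs, hne⟩
          · rw [hn]; exact ⟨fun _ => ts i, rfl⟩
          · refine ih i (ts' i) ?_ hne ?_
            · have := S12.stPat_mem (S12.SR_arg hSR i)
              rwa [hs] at this
            · have := congrFun hqs i
              rwa [hs] at this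
        obtain ⟨σ, hσ⟩ := S12.combine_subst (fun m i j hi hj =>
          S12.linear_disjoint (S12.SR_linear hll happrox hSR) hi hj) hinst
        refine ⟨σ, ?_⟩
        show Term.app f ts = Term.app f (fun i => (ts' i).subst σ)
        exact congrArg _ (funext hσ)
      · obtain ⟨g, ls, r, hR, heq⟩ := hrr
        exact absurd ((S12.tarule_target heq).symm.trans hq) (S12.qr_ne_enc2 C hb hbne)
      · obtain ⟨g, j, heq⟩ := hqp
        exact absurd ((S12.tarule_target heq).symm.trans hq) (S12.qr_ne_enc2 C hb hbne)

end S12Core2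
section S12Core3

open Term

variable {F : Type} [Fintype F] {ar : F → ℕ} {Q : Type} [Fintype Q]
  {R Rg : TRS F ar} (C : CpSetup Q Rg.liftB (TRS.NFset R.bullet))

theorem S12.satArg_eq (happrox : IsGrowingApprox R Rg) {g : Option F}
    {ls : Fin (arB ar g) → Term (Option F) (arB ar)} {r : Term (Option F) (arB ar)}
    (hR : (Term.app g ls, r) ∈ Rg.liftB.rules) (θ : ℕ → Q) (i : Fin (arB ar g)) :
    satArg C.enc θ r.vars (ls i) = C.enc (stPattern (ls i)) := by
  cases hls : ls i with
  | var n =>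
      show (if n ∈ r.vars then θ n else C.enc (Term.var 0)) = C.enc (Term.var 0)
      rw [if_neg]
      intro hn
      have hnl : n ∈ (Term.app g ls).vars := by
        simp only [Term.vars, Finset.mem_biUnion]
        exact ⟨i, Finset.mem_univ i, by rw [hls]; simp [Term.vars]⟩
      exact S12.Rb_disj happrox _ hR n hn hnl
  | app g' ts' => rfl

theorem S12.mem_Γsat {g : Option F} {ls : Fin (arB ar g) → Term (Option F) (arB ar)}
    {r : Term (Option F) (arB ar)} {θ : ℕ → Q} {q : Q}
    (hR : (Term.app g ls, r) ∈ Rg.liftB.rules)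
    (hθ : ∀ n ∈ r.vars, θ n ∈ C.toCSetup.Qstates)
    (hreach : ReachesT C.toCSetup.Γsat θ r q) :
    (⟨g, fun i => satArg C.enc θ r.vars (ls i), q⟩ : TARule (Option F) (arB ar) Q)
      ∈ C.toCSetup.Γsat := by
  rw [S12.Γsat_eq] at hreach
  obtain ⟨m, hm⟩ := S12.reachesT_iUnion (S12.Γn_mono C) hreach
  rw [S12.Γsat_eq, Set.mem_iUnion]
  refine ⟨m + 1, ?_⟩
  rw [Function.iterate_succ_apply']
  exact Or.inr ⟨g, ls, r, θ, q, hR, hθ, hm, rfl⟩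

theorem S12.state_inhabited {q : Q} (hq : q ∈ C.toCSetup.Qstates) :
    ∃ u : Term (Option F) (arB ar), u.Ground ∧ Reaches C.toCSetup.Γ0 u q := by
  rcases hq with hQA | ⟨b, hb, rfl⟩
  · obtain ⟨u, hg, hr⟩ := C.hacc q hQA
    exact ⟨u, hg, S12.reaches_mono (S12.A_sub_Γ0 C) hr⟩
  · rcases hb with ⟨b0, hb0, rfl⟩ | hb0
    · refine ⟨b0.subst (fun _ => bulletTm), S12.ground_subst (fun _ => S12.bullet_ground), ?_⟩
      exact S12.reaches_mono (S12.BTrans_sub_Γ0 C)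
        (S12.reaches_inst (S12.BMatch_sub_BTrans C) (fun w hw => S12.allx_BTrans C hw) hb0
          (S12.ground_subst (fun _ => S12.bullet_ground)))
    · have hb0' : b = Term.var 0 := hb0
      subst hb0'
      exact ⟨bulletTm, S12.bullet_ground,
        S12.reaches_mono (S12.BTrans_sub_Γ0 C) (S12.allx_BTrans C S12.bullet_ground)⟩

theorem S12.Γsat_sound_n (hll : R.LeftLinear) (happrox : IsGrowingApprox R Rg) :
    ∀ n, ∀ w : Term (Option F) (arB ar), ∀ q : Q,
      Reaches ((satStep Rg.liftB C.enc C.toCSetup.Qstates)^[n] C.toCSetup.Γ0) w q →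
      w.Ground →
      ∃ w', RewritesStar Rg.liftB.rules w w' ∧ w'.Ground ∧ Reaches C.toCSetup.Γ0 w' q := by
  intro n
  induction n with
  | zero =>
      intro w q h hg
      rw [Function.iterate_zero_apply] at h
      exact ⟨w, Relation.ReflTransGen.refl, hg, h⟩
  | succ n ih =>
      have hsub0 : C.toCSetup.Γ0 ⊆ (satStep Rg.liftB C.enc C.toCSetup.Qstates)^[n] C.toCSetup.Γ0 :=
        fun ρ hρ => S12.Γn_mono C (Nat.zero_le n) hρ
      intro w q h
      rw [Function.iterate_succ_apply'] at h
      induction h with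
      | app hargs hrule ihd =>
          rename_i f ts qs q
          intro hg
          have hgts : ∀ i, (ts i).Ground := fun i => S12.ground_app.1 hg i
          choose ws hws1 hws2 hws3 using (fun i => ihd i (hgts i))
          have star1 : RewritesStar Rg.liftB.rules (Term.app f ts) (Term.app f ws) :=
            S12.rewritesStar_app_all hws1
          rcases hrule with hprev | ⟨g, ls, r, θ, q', hR, hθ, hreach, heq⟩
          · have h2 : Reaches ((satStep Rg.liftB C.enc C.toCSetup.Qstates)^[n] C.toCSetup.Γ0)
                (Term.app f ws) q :=
              Reaches.app (fun i => S12.reaches_mono hsub0 (hws3 i)) hprev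
            obtain ⟨w', star2, hg', h0⟩ := ih _ _ h2 (S12.ground_app.2 hws2)
            exact ⟨w', star1.trans star2, hg', h0⟩
          · obtain ⟨h1, h2⟩ := Sigma.mk.inj_iff.1 heq
            subst h1
            obtain ⟨hqs, hqq⟩ := Prod.mk.inj (eq_of_heq h2)
            subst hqq
            have hlin : (Term.app f ls).Linear := by
              have := S12.Rb_leftLinear hll happrox _ hR
              exact this
            have hinst : ∀ i, ∃ σ, ws i = (ls i).subst σ := by
              intro i
              refine S12.SR_stPat_inst ?_
              have hqi : qs i = C.enc (stPattern (ls i)) := by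
                rw [congrFun hqs i, S12.satArg_eq C happrox hR θ i]
              have hmem : qs i ∈ C.enc '' BStateSet Rg.liftB := by
                rw [hqi]
                exact Set.mem_image_of_mem _ (S12.stPat_mem (S12.lhsarg_SR hR i))
              have hBT := (S12.Γ0_sep C (hws3 i)).2 hmem
              exact S12.btrans_char C hll happrox hBT (stPattern (ls i))
                (S12.stPat_mem (S12.lhsarg_SR hR i)) hqi
            obtain ⟨σ, hσ⟩ := S12.combine_subst (fun m i j hi hj =>
              S12.linear_disjoint hlin hi hj) hinst
            have hτ : ∀ m : ℕ, ∃ u : Term (Option F) (arB ar),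
                u.Ground ∧ (m ∈ r.vars → Reaches C.toCSetup.Γ0 u (θ m)) := by
              intro m
              by_cases hm : m ∈ r.vars
              · obtain ⟨u, hgu, hru⟩ := S12.state_inhabited C (hθ m hm)
                exact ⟨u, hgu, fun _ => hru⟩
              · exact ⟨bulletTm, S12.bullet_ground, fun hc => absurd hc hm⟩
            choose τ hτg hτr using hτ
            have hrτ : Reaches ((satStep Rg.liftB C.enc C.toCSetup.Qstates)^[n] C.toCSetup.Γ0)
                (r.subst τ) q :=
              S12.reaches_subst hreach (fun m hm =>
                S12.reaches_mono hsub0 (hτr m hm))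
            obtain ⟨w', star2, hg', h0⟩ := ih _ _ hrτ (S12.ground_subst hτg)
            have hstep : Rewrites Rg.liftB.rules ((Term.app f ls).subst σ) (r.subst τ) :=
              S12.rewrites_root hR (S12.Rb_disj happrox _ hR) σ τ
            have happeq : Term.app f ws = (Term.app f ls).subst σ := by
              show _ = Term.app f (fun i => (ls i).subst σ)
              exact congrArg _ (funext hσ)
            rw [← happeq] at hstep
            exact ⟨w', star1.trans (Relation.ReflTransGen.head hstep star2), hg', h0⟩

theorem S12.Γsat_sound (hll : R.LeftLinear) (happrox : IsGrowingApprox R Rg)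
    {w : Term (Option F) (arB ar)} {q : Q} (h : Reaches C.toCSetup.Γsat w q)
    (hg : w.Ground) :
    ∃ w', RewritesStar Rg.liftB.rules w w' ∧ w'.Ground ∧ Reaches C.toCSetup.Γ0 w' q := by
  rw [S12.Γsat_eq] at h
  obtain ⟨n, hn⟩ := S12.reaches_iUnion (S12.Γn_mono C) h
  exact S12.Γsat_sound_n C hll happrox n w q hn hg

theorem S12.Gx_of_noBul {t : Term (Option F) (arB ar)} {q : Q}
    (h : Reaches C.toCSetup.Γsat t q) (hnb : S12.NoBul t) : Reaches (S12.Gx C) t q := by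
  induction h with
  | app hargs hrule ih =>
      exact Reaches.app (fun i => ih i (hnb.2 i)) ⟨hrule, fun hnone => absurd hnone hnb.1⟩

theorem S12.Gx_root (hll : R.LeftLinear) (happrox : IsGrowingApprox R Rg)
    {l r : Term (Option F) (arB ar)} {σ : ℕ → Term (Option F) (arB ar)} {q : Q}
    (hR : (l, r) ∈ Rg.liftB.rules) (hg : (l.subst σ).Ground)
    (h : Reaches (S12.Gx C) (r.subst σ) q) : Reaches (S12.Gx C) (l.subst σ) q := by
  have hrl : r.Linear := S12.Rb_rightLinear happrox _ hR
  obtain ⟨θ, hθT, hθσ⟩ := S12.reaches_decompose hrl h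
  have hθQ : ∀ n ∈ r.vars, θ n ∈ C.toCSetup.Qstates := fun n hn =>
    S12.reaches_Γsat_state C (S12.reaches_mono (S12.Gx_sub_Γsat C) (hθσ n hn))
  obtain ⟨g, ls, hl, hgn⟩ := S12.Rb_lhs_app Rg hR
  simp only at hl
  subst hl
  have hrule := S12.mem_Γsat C hR hθQ (S12.reachesT_mono (S12.Gx_sub_Γsat C) hθT)
  have hruleGx : (⟨g, fun i => satArg C.enc θ r.vars (ls i), q⟩
      : TARule (Option F) (arB ar) Q) ∈ S12.Gx C :=
    ⟨hrule, fun hnone => absurd hnone hgn⟩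
  show Reaches (S12.Gx C) (Term.app g (fun i => (ls i).subst σ)) q
  refine Reaches.app (qs := fun i => satArg C.enc θ r.vars (ls i)) (fun i => ?_) hruleGx
  show Reaches (S12.Gx C) ((ls i).subst σ) (satArg C.enc θ r.vars (ls i))
  rw [S12.satArg_eq C happrox hR θ i]
  exact S12.reaches_inst (S12.BMatch_sub_Gx C) (fun w hw => S12.allx_Gx C hw)
    (S12.lhsarg_SR hR i) (S12.ground_app.1 hg i)

theorem S12.Gx_backward (hll : R.LeftLinear) (happrox : IsGrowingApprox R Rg)
    {w w' : Term (Option F) (arB ar)} (hrw : Rewrites Rg.liftB.rules w w')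
    (hg : w.Ground) {q : Q} (h : Reaches (S12.Gx C) w' q) : Reaches (S12.Gx C) w q := by
  obtain ⟨p, l, r, σ, hR, hsub, hrep⟩ := hrw
  exact S12.reaches_replace hsub hrep
    (fun q' h' => S12.Gx_root C hll happrox hR (S12.ground_of_subtermAt hg hsub) h') h

theorem S12.claimD (hll : R.LeftLinear) (happrox : IsGrowingApprox R Rg)
    {w t : Term (Option F) (arB ar)}
    (hstar : RewritesStar Rg.liftB.rules w t) (hNF : t ∈ TRS.NFset R.bullet) :
    ∀ γ : ℕ → Term (Option F) (arB ar), (∀ m, (γ m).Ground) →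
      ∃ qf ∈ C.A.final, Reaches (S12.Gx C) (w.subst γ) qf := by
  induction hstar using Relation.ReflTransGen.head_induction_on with
  | refl =>
      intro γ hγ
      have hLang : t ∈ Lang C.A := C.hT ▸ hNF
      obtain ⟨hgt, qf, hqf, hr⟩ := hLang
      refine ⟨qf, hqf, ?_⟩
      rw [S12.subst_ground hgt]
      exact S12.Gx_of_noBul C
        (S12.reaches_mono (fun ρ hρ => S12.Γ0_sub_Γsat C (S12.A_sub_Γ0 C hρ)) hr)
        (S12.NF_noBul R hNF)
  | head hstep hstar2 ih =>
      intro γ hγ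
      obtain ⟨qf, hqf, hr⟩ := ih γ hγ
      refine ⟨qf, hqf, ?_⟩
      exact S12.Gx_backward C hll happrox (S12.rewrites_subst hstep γ)
        (S12.ground_subst hγ) hr

end S12Core3
section S12Qr

open Term

variable {F : Type} [Fintype F] {ar : F → ℕ} {Q : Type} [Fintype Q]
  {R Rg : TRS F ar} (C : CpSetup Q Rg.liftB (TRS.NFset R.bullet))

theorem S12.reaches_qr_of_redex : ∀ (p : List ℕ) (w : Term (Option F) (arB ar)), w.Ground →
    Rg.liftB.RedexPos w p → Reaches C.Γ' w C.qr := by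
  intro p
  induction p with
  | nil =>
      intro w hg hred
      obtain ⟨u, hsub, lr, hR, σ, hu⟩ := hred
      rw [S12.subtermAt_nil, Option.some.injEq] at hsub
      subst hsub
      obtain ⟨g, ls, hl, hgn⟩ := S12.Rb_lhs_app Rg hR
      have hlr : lr = (Term.app g ls, lr.2) := by rw [← hl]
      have hR' : (Term.app g ls, lr.2) ∈ Rg.liftB.rules := by rwa [hlr] at hR
      rw [hu, hl]
      show Reaches C.Γ' (Term.app g (fun i => (ls i).subst σ)) C.qr
      have hgw : ((Term.app g ls).subst σ).Ground := by rw [← hl, ← hu]; exact hg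
      refine Reaches.app (qs := fun i => C.enc2 (stPattern (ls i))) (fun i => ?_)
        (S12.RedexRules_sub_Γ' C ⟨g, ls, lr.2, hR', rfl⟩)
      show Reaches C.Γ' ((ls i).subst σ) (C.enc2 (stPattern (ls i)))
      refine S12.reaches_inst (S12.BMatch2_sub_Γ' C) (fun v hv => ?_)
        (S12.lhsarg_SR hR' i) (S12.ground_app.1 hgw i)
      rw [C.hx]
      exact S12.allx_Γ' C hv
  | cons i0 p ihp =>
      intro w hg hred
      obtain ⟨u, hsub, hredu⟩ := hred
      cases w with
      | var n => simp [Term.subtermAt] at hsub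
      | app g ws =>
          simp only [Term.subtermAt] at hsub
          split at hsub
          · rename_i hlt
            have hq := ihp (ws ⟨i0, hlt⟩) (S12.ground_app.1 hg ⟨i0, hlt⟩) ⟨u, hsub, hredu⟩
            refine Reaches.app
              (qs := fun j => if j = ⟨i0, hlt⟩ then C.qr else C.enc (Term.var 0))
              (fun j => ?_) (S12.QrProp_sub_Γ' C ⟨g, ⟨i0, hlt⟩, rfl⟩)
            show Reaches C.Γ' (ws j) (if j = ⟨i0, hlt⟩ then C.qr else C.enc (Term.var 0))
            by_cases hj : j = (⟨i0, hlt⟩ : Fin (arB ar g))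
            · rw [if_pos hj, hj]
              exact hq
            · rw [if_neg hj]
              exact S12.allx_Γ' C (S12.ground_app.1 hg j)
          · exact absurd hsub (by simp)

theorem S12.redex_of_reaches_qr (hll : R.LeftLinear) (happrox : IsGrowingApprox R Rg)
    {w : Term (Option F) (arB ar)} {q : Q} (h : Reaches C.Γ' w q) :
    q = C.qr → ∃ p, Rg.liftB.RedexPos w p := by
  induction h with
  | app hargs hrule ih =>
      rename_i f ts qs q
      intro hq
      subst hq
      rcases hrule with ((hsat | hm2) | hrr) | hqp
      · exact absurd (S12.Γsat_states C _ hsat).1 (S12.qr_not_Qstates C)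
      · obtain ⟨g, ts', hSR, heq⟩ := hm2
        exact absurd (S12.tarule_target heq)
          (S12.qr_ne_enc2 C (S12.stPat_mem hSR) S12.stPat_ne_var0)
      · obtain ⟨g, ls, r, hR, heq⟩ := hrr
        obtain ⟨h1, h2⟩ := Sigma.mk.inj_iff.1 heq
        subst h1
        obtain ⟨hqs, _⟩ := Prod.mk.inj (eq_of_heq h2)
        have hinst : ∀ i, ∃ σ, ts i = (ls i).subst σ := by
          intro i
          rcases S12.stPat_cases (ls i) with ⟨n, hn⟩ | ⟨hs, hne⟩
          · rw [hn]; exact ⟨fun _ => ts i, rfl⟩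
          · refine S12.Γ'_enc2_char C hll happrox (hargs i) (ls i) ?_ hne ?_
            · have := S12.stPat_mem (S12.lhsarg_SR hR i)
              rwa [hs] at this
            · have := congrFun hqs i
              rwa [hs] at this
        have hlin : (Term.app f ls).Linear := S12.Rb_leftLinear hll happrox _ hR
        obtain ⟨σ, hσ⟩ := S12.combine_subst (fun m i j hi hj =>
          S12.linear_disjoint hlin hi hj) hinst
        refine ⟨[], Term.app f ts, S12.subtermAt_nil _, (Term.app f ls, r), hR, σ, ?_⟩
        show Term.app f ts = Term.app f (fun i => (ls i).subst σ)
        exact congrArg _ (funext hσ)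
      · obtain ⟨g, j, heq⟩ := hqp
        obtain ⟨h1, h2⟩ := Sigma.mk.inj_iff.1 heq
        subst h1
        obtain ⟨hqs, _⟩ := Prod.mk.inj (eq_of_heq h2)
        have hj : qs j = C.qr := by rw [congrFun hqs j, if_pos rfl]
        obtain ⟨p, u, hsub, hredu⟩ := ih j hj
        refine ⟨(j : ℕ) :: p, u, ?_, hredu⟩
        simp only [Term.subtermAt]
        rw [dif_pos j.isLt, Fin.eta]
        exact hsub

theorem S12.lhsMatch_iff (hll : R.LeftLinear) (happrox : IsGrowingApprox R Rg)
    {f : F} {ts : Fin (arB ar (some f)) → Term (Option F) (arB ar)}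
    (hg : ∀ i, (ts i).Ground) :
    LhsMatch Rg.liftB C.enc2 (some f) (fun i => dn C.Γ' (ts i)) ↔
      Rg.liftB.IsRedex (Term.app (some f) ts) := by
  constructor
  · rintro ⟨ls, r, hR, hmem⟩
    have hinst : ∀ i, ∃ σ, ts i = (ls i).subst σ := by
      intro i
      rcases S12.stPat_cases (ls i) with ⟨n, hn⟩ | ⟨hs, hne⟩
      · rw [hn]; exact ⟨fun _ => ts i, rfl⟩
      · refine S12.Γ'_enc2_char C hll happrox (hmem i) (ls i) ?_ hne ?_
        · have := S12.stPat_mem (S12.lhsarg_SR hR i)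
          rwa [hs] at this
        · rw [hs]
    have hlin : (Term.app (some f) ls).Linear := S12.Rb_leftLinear hll happrox _ hR
    obtain ⟨σ, hσ⟩ := S12.combine_subst (fun m i j hi hj =>
      S12.linear_disjoint hlin hi hj) hinst
    refine ⟨(Term.app (some f) ls, r), hR, σ, ?_⟩
    show Term.app (some f) ts = Term.app (some f) (fun i => (ls i).subst σ)
    exact congrArg _ (funext hσ)
  · rintro ⟨lr, hR, σ, heq⟩
    obtain ⟨g, ls, hl, hgn⟩ := S12.Rb_lhs_app Rg hR
    have hlr : lr = (Term.app g ls, lr.2) := by rw [← hl]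
    have hR' : (Term.app g ls, lr.2) ∈ Rg.liftB.rules := by rwa [hlr] at hR
    rw [hl] at heq
    rw [show (Term.app g ls).subst σ = Term.app g (fun i => (ls i).subst σ) from rfl] at heq
    obtain ⟨hfg, hts⟩ := Term.app.inj heq
    subst hfg
    have hts := eq_of_heq hts
    refine ⟨ls, lr.2, hR', fun i => ?_⟩
    show Reaches C.Γ' (ts i) (C.enc2 (stPattern (ls i)))
    rw [congrFun hts i]
    refine S12.reaches_inst (S12.BMatch2_sub_Γ' C) (fun v hv => ?_)
      (S12.lhsarg_SR hR' i) ?_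
    · rw [C.hx]
      exact S12.allx_Γ' C hv
    · rw [← congrFun hts i]
      exact hg i
end S12Qr
section S12D

open Term

variable {F : Type} [Fintype F] {ar : F → ℕ} {Q : Type} [Fintype Q]
  {R Rg : TRS F ar} (C : CpSetup Q Rg.liftB (TRS.NFset R.bullet))

theorem S12.liftB_cons_subterm {f : F} {ts : Fin (ar f) → Term F ar} (i : Fin (ar f))
    {p : List ℕ} {v : Term (Option F) (arB ar)}
    (h : (liftB (ts i)).subtermAt p = some v) :
    (liftB (Term.app f ts)).subtermAt ((i : ℕ) :: p) = some v := by
  rw [S12.liftB_app]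
  simp only [Term.subtermAt]
  erw [dif_pos i.isLt]
  exact h

theorem S12.liftB_cons_replace {f : F} {ts : Fin (ar f) → Term F ar} (i : Fin (ar f))
    {p : List ℕ} {u : Term (Option F) (arB ar)}
    (h : (liftB (ts i)).replaceAt p bulletTm = some u) :
    (liftB (Term.app f ts)).replaceAt ((i : ℕ) :: p) bulletTm
      = some (Term.app (some f) (Function.update (fun j => liftB (ts j)) i u)) := by
  rw [S12.liftB_app]
  simp only [Term.replaceAt]
  erw [dif_pos i.isLt, Fin.eta, h]
  rfl

theorem S12.DTrans_inv {f : F} {qs : Fin (ar f) → Set Q × Set Q} {q : Set Q × Set Q}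
    (h : (⟨f, qs, q⟩ : TARule F ar (Set Q × Set Q)) ∈ DTrans Rg.liftB C.Γ' C.enc C.enc2) :
    ∃ P1 P2 : Set Q,
      P1 ⊆ (⋃ i : Fin (ar f), oneStep C.Γ' (some f)
              (fun j => @ite _ (j = i) (instDecidableEqFin _ j i) (qs j).2 (qs j).1)) ∧
      (∀ i, ∀ q' ∈ (qs i).2,
        (P1 ∩ oneStep C.Γ' (some f) (fun j => @ite _ (j = i) (instDecidableEqFin _ j i) {q'} (qs j).1)).Nonempty) ∧
      ((LhsMatch Rg.liftB C.enc2 (some f) (fun i => (qs i).1) ∧ P2 = {C.enc (Term.var 0)}) ∨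
       (¬ LhsMatch Rg.liftB C.enc2 (some f) (fun i => (qs i).1) ∧ P2 = (∅ : Set Q))) ∧
      q = (oneStep C.Γ' (some f) (fun i => (qs i).1), P1 ∪ P2) := by
  obtain ⟨f', SP', P1, P2, h1, h2, h3, heq⟩ := h
  obtain ⟨hf, hrest⟩ := Sigma.mk.inj_iff.1 heq
  subst hf
  obtain ⟨hqs, hq⟩ := Prod.mk.inj (eq_of_heq hrest)
  subst hqs
  exact ⟨P1, P2, h1, h2, h3, hq⟩

theorem S12.reaches_update_app {Δ : Set (TARule (Option F) (arB ar) Q)} {f : F}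
    {ts : Fin (ar f) → Term F ar} {i : Fin (ar f)} {u : Term (Option F) (arB ar)}
    {qs' : Fin (arB ar (some f)) → Q} {q0 : Q}
    (hrule : (⟨some f, qs', q0⟩ : TARule (Option F) (arB ar) Q) ∈ Δ)
    (hu : Reaches Δ u (qs' i))
    (hrest : ∀ j : Fin (ar f), j ≠ i → Reaches Δ (liftB (ts j)) (qs' j)) :
    Reaches Δ (Term.app (some f) (Function.update (fun j => liftB (ts j)) i u)) q0 := by
  refine Reaches.app (qs := qs') (fun (j : Fin (ar f)) => ?_) hrule
  show Reaches Δ (Function.update (fun j => liftB (ts j)) i u j) (qs' j)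
  by_cases hj : j = i
  · subst hj
    rw [Function.update_self]
    exact hu
  · rw [Function.update_of_ne hj]
    exact hrest j hj

theorem S12.lhsMatch_congr {g : Option F} {Ss Ss' : Fin (arB ar g) → Set Q}
    (h : ∀ i, Ss i = Ss' i) (hm : LhsMatch Rg.liftB C.enc2 g Ss) :
    LhsMatch Rg.liftB C.enc2 g Ss' := by
  obtain ⟨ls, r, hR, hmem⟩ := hm
  exact ⟨ls, r, hR, fun i => (h i) ▸ hmem i⟩

theorem S12.D_S_comp {t : Term F ar} {SP : Set Q × Set Q}
    (h : Reaches (DTrans Rg.liftB C.Γ' C.enc C.enc2) t SP) :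
    SP.1 = dn C.Γ' (liftB t) := by
  induction h with
  | app hargs hrule ih =>
      rename_i f ts qs q
      obtain ⟨P1, P2, h1, h2, h3, hq⟩ := S12.DTrans_inv C hrule
      rw [hq]
      show oneStep C.Γ' (some f) (fun i => (qs i).1) = _
      rw [S12.liftB_app, S12.dn_app]
      have hfun : (fun i : Fin (arB ar (some f)) => (qs i).1)
          = fun i => dn C.Γ' (liftB (ts i)) := funext (fun i => ih i)
      rw [hfun]
      rfl

theorem S12.D_ground {t : Term F ar} {SP : Set Q × Set Q}
    (h : Reaches (DTrans Rg.liftB C.Γ' C.enc C.enc2) t SP) : t.Ground := by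
  induction h with
  | app hargs hrule ih => exact S12.ground_app.2 ih

theorem S12.D_P_sound (hll : R.LeftLinear) (happrox : IsGrowingApprox R Rg)
    {t : Term F ar} {SP : Set Q × Set Q}
    (h : Reaches (DTrans Rg.liftB C.Γ' C.enc C.enc2) t SP) :
    ∀ q0 ∈ SP.2, ∃ p u, Rg.liftB.RedexPos (liftB t) p ∧
      (liftB t).replaceAt p bulletTm = some u ∧ Reaches C.Γ' u q0 := by
  induction h with
  | app hargs hrule ih =>
      rename_i f ts qs q
      obtain ⟨P1, P2, hP1, hcov, hP2, hq⟩ := S12.DTrans_inv C hrule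
      intro q0 hq0
      rw [hq] at hq0
      have hS : ∀ i, (qs i).1 = dn C.Γ' (liftB (ts i)) := fun i => S12.D_S_comp C (hargs i)
      have hgt : ∀ i, (ts i).Ground := fun i => S12.D_ground C (hargs i)
      rcases hq0 with hq1 | hq2
      · have hmem := hP1 hq1
        rw [Set.mem_iUnion] at hmem
        obtain ⟨i, qs', hsel, hrule'⟩ := hmem
        have hqi : qs' i ∈ (qs i).2 := by
          have hb : qs' i ∈ (if i = i then (qs i).2 else (qs i).1) := hsel i
          rwa [if_pos rfl] at hb
        obtain ⟨p, u, hredp, hrep, hreach⟩ := ih i (qs' i) hqi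
        refine ⟨(i : ℕ) :: p, Term.app (some f) (Function.update (fun j => liftB (ts j)) i u),
          ?_, S12.liftB_cons_replace i hrep, ?_⟩
        · obtain ⟨v, hsub, hredv⟩ := hredp
          exact ⟨v, S12.liftB_cons_subterm i hsub, hredv⟩
        · refine S12.reaches_update_app hrule' hreach (fun j hj => ?_)
          have hb : qs' j ∈ (if j = i then (qs j).2 else (qs j).1) := hsel j
          rw [if_neg hj, hS j] at hb
          exact hb
      · rcases hP2 with ⟨hmatch, hP2e⟩ | ⟨hnm, hP2e⟩
        · rw [hP2e] at hq2
          have hq0x : q0 = C.enc (Term.var 0) := hq2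
          subst hq0x
          have hred : Rg.liftB.IsRedex (liftB (Term.app f ts)) := by
            rw [S12.liftB_app]
            refine (S12.lhsMatch_iff C hll happrox
              (fun i => (S12.ground_liftB).2 (hgt i))).1 ?_
            exact S12.lhsMatch_congr C (fun i => hS i) hmatch
          refine ⟨[], bulletTm, ⟨liftB (Term.app f ts), S12.subtermAt_nil _, hred⟩,
            S12.replaceAt_nil _ _, S12.allx_Γ' C S12.bullet_ground⟩
        · rw [hP2e] at hq2
          exact absurd hq2 (Set.notMem_empty q0)

theorem S12.D_P_cover (hll : R.LeftLinear) (happrox : IsGrowingApprox R Rg)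
    {t : Term F ar} {SP : Set Q × Set Q}
    (h : Reaches (DTrans Rg.liftB C.Γ' C.enc C.enc2) t SP) :
    ∀ p, Rg.liftB.RedexPos (liftB t) p → ∃ q0 ∈ SP.2, ∃ u,
      (liftB t).replaceAt p bulletTm = some u ∧ Reaches C.Γ' u q0 := by
  induction h with
  | app hargs hrule ih =>
      rename_i f ts qs q
      obtain ⟨P1, P2, hP1, hcov, hP2, hq⟩ := S12.DTrans_inv C hrule
      have hS : ∀ i, (qs i).1 = dn C.Γ' (liftB (ts i)) := fun i => S12.D_S_comp C (hargs i)
      have hgt : ∀ i, (ts i).Ground := fun i => S12.D_ground C (hargs i)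
      intro p hp
      cases p with
      | nil =>
          obtain ⟨v, hsub, hredv⟩ := hp
          rw [S12.subtermAt_nil, Option.some.injEq] at hsub
          subst hsub
          have hmatch : LhsMatch Rg.liftB C.enc2 (some f) (fun i => (qs i).1) := by
            rw [S12.liftB_app] at hredv
            exact S12.lhsMatch_congr C (fun i => (hS i).symm)
              ((S12.lhsMatch_iff C hll happrox
                (fun i => (S12.ground_liftB).2 (hgt i))).2 hredv)
          rcases hP2 with ⟨_, hP2e⟩ | ⟨hnm, _⟩
          · refine ⟨C.enc (Term.var 0), ?_, bulletTm, S12.replaceAt_nil _ _,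
              S12.allx_Γ' C S12.bullet_ground⟩
            rw [hq]
            exact Or.inr (hP2e ▸ rfl)
          · exact absurd hmatch hnm
      | cons i0 p' =>
          obtain ⟨v, hsub, hredv⟩ := hp
          rw [S12.liftB_app] at hsub
          simp only [Term.subtermAt] at hsub
          split at hsub
          · rename_i hlt
            have hredchild : Rg.liftB.RedexPos (liftB (ts ⟨i0, hlt⟩)) p' := ⟨v, hsub, hredv⟩
            obtain ⟨q', hq', u', hrep', hreach'⟩ := ih ⟨i0, hlt⟩ p' hredchild
            obtain ⟨q0, hq0P1, qs', hsel, hrule'⟩ := hcov ⟨i0, hlt⟩ q' hq'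
            have hcast : ((i0 : ℕ) :: p' : List ℕ)
                = ((((⟨i0, hlt⟩ : Fin (ar f)) : ℕ)) :: p' : List ℕ) := rfl
            refine ⟨q0, by rw [hq]; exact Or.inl hq0P1,
              Term.app (some f) (Function.update (fun j => liftB (ts j)) ⟨i0, hlt⟩ u'), ?_, ?_⟩
            · rw [hcast]
              exact S12.liftB_cons_replace (⟨i0, hlt⟩ : Fin (ar f)) hrep'
            · refine S12.reaches_update_app hrule' ?_ (fun j hj => ?_)
              · have hb : qs' ⟨i0, hlt⟩ ∈ (if (⟨i0, hlt⟩ : Fin (ar f)) = ⟨i0, hlt⟩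
                    then ({q'} : Set Q) else (qs ⟨i0, hlt⟩).1) := hsel ⟨i0, hlt⟩
                rw [if_pos rfl] at hb
                have hqq : qs' ⟨i0, hlt⟩ = q' := hb
                rw [hqq]
                exact hreach'
              · have hb : qs' j ∈ (if j = (⟨i0, hlt⟩ : Fin (ar f))
                    then ({q'} : Set Q) else (qs j).1) := hsel j
                erw [if_neg hj, hS j] at hb
                exact hb
          · exact absurd hsub (by simp)

end S12D
section S12Run

open Term

variable {F : Type} [Fintype F] {ar : F → ℕ} {Q : Type} [Fintype Q]
  {R Rg : TRS F ar}

theorem S12.bullet_Gx_state (C : CpSetup Q Rg.liftB (TRS.NFset R.bullet)) {q : Q}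
    (h : Reaches (S12.Gx C) bulletTm q) : q = C.enc (Term.var 0) := by
  cases h with
  | app hargs hrule => exact hrule.2 rfl

theorem S12.redexPos_cons_lt {f : F} {ts : Fin (ar f) → Term F ar} {i0 : ℕ} {p : List ℕ}
    (h : Rg.liftB.RedexPos (liftB (Term.app f ts)) (i0 :: p)) : i0 < ar f := by
  obtain ⟨v, hsub, _⟩ := h
  rw [S12.liftB_app] at hsub
  simp only [Term.subtermAt] at hsub
  split at hsub
  · rename_i hlt
    exact hlt
  · exact absurd hsub (by simp)

theorem S12.redexPos_cons_child {f : F} {ts : Fin (ar f) → Term F ar} (i : Fin (ar f))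
    {p : List ℕ} (h : Rg.liftB.RedexPos (liftB (Term.app f ts)) ((i : ℕ) :: p)) :
    Rg.liftB.RedexPos (liftB (ts i)) p := by
  obtain ⟨v, hsub, hred⟩ := h
  rw [S12.liftB_app] at hsub
  simp only [Term.subtermAt] at hsub
  erw [dif_pos i.isLt] at hsub
  exact ⟨v, hsub, hred⟩

theorem S12.redexPos_cons_intro {f : F} {ts : Fin (ar f) → Term F ar} (i : Fin (ar f))
    {p : List ℕ} (h : Rg.liftB.RedexPos (liftB (ts i)) p) :
    Rg.liftB.RedexPos (liftB (Term.app f ts)) ((i : ℕ) :: p) := by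
  obtain ⟨v, hsub, hred⟩ := h
  exact ⟨v, S12.liftB_cons_subterm i hsub, hred⟩

/-- The induced hole-run data for the `i`-th child. -/
def S12.childK (C : CpSetup Q Rg.liftB (TRS.NFset R.bullet)) (f : F)
    (ts : Fin (ar f) → Term F ar) (K : Set (List ℕ × Q)) (i : Fin (ar f)) :
    Set (List ℕ × Q) :=
  {pq | ∃ (u : Term (Option F) (arB ar)) (q : Q) (qs' : Fin (arB ar (some f)) → Q),
    (liftB (ts i)).replaceAt pq.1 bulletTm = some u ∧
    ((i : ℕ) :: pq.1, q) ∈ K ∧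
    (⟨some f, qs', q⟩ : TARule (Option F) (arB ar) Q) ∈ S12.Gx C ∧
    qs' i = pq.2 ∧ Reaches (S12.Gx C) u pq.2 ∧
    ∀ j : Fin (ar f), j ≠ i → Reaches (S12.Gx C) (liftB (ts j)) (qs' j)}

theorem S12.D_run (C : CpSetup Q Rg.liftB (TRS.NFset R.bullet))
    (hll : R.LeftLinear) (happrox : IsGrowingApprox R Rg) :
    ∀ t : Term F ar, t.Ground → ∀ K : Set (List ℕ × Q),
      (∀ pq ∈ K, Rg.liftB.RedexPos (liftB t) pq.1 ∧
        ∃ u, (liftB t).replaceAt pq.1 bulletTm = some u ∧ Reaches (S12.Gx C) u pq.2) →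
      (∀ p, Rg.liftB.RedexPos (liftB t) p → ∃ q, (p, q) ∈ K) →
      Reaches (DTrans Rg.liftB C.Γ' C.enc C.enc2) t
        (dn C.Γ' (liftB t), {q | ∃ p, (p, q) ∈ K}) := by
  intro t
  induction t with
  | var n => exact fun hg => absurd hg (S12.ground_var n)
  | app f ts ih =>
      intro hg K hvalid hcover
      classical
      have hgt : ∀ i, (ts i).Ground := fun i => S12.ground_app.1 hg i
      -- decompose a K entry at a cons position
      have hdec : ∀ (i : Fin (ar f)) (p' : List ℕ) (q : Q), (((i : ℕ) :: p', q) ∈ K) →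
          ∃ (u : Term (Option F) (arB ar)) (qs' : Fin (arB ar (some f)) → Q),
            (liftB (ts i)).replaceAt p' bulletTm = some u ∧
            (⟨some f, qs', q⟩ : TARule (Option F) (arB ar) Q) ∈ S12.Gx C ∧
            Reaches (S12.Gx C) u (qs' i) ∧
            ∀ j : Fin (ar f), j ≠ i → Reaches (S12.Gx C) (liftB (ts j)) (qs' j) := by
        intro i p' q hK
        obtain ⟨hredp, u_t, hrepl, hreachx⟩ := hvalid _ hK
        have hredc : Rg.liftB.RedexPos (liftB (ts i)) p' := S12.redexPos_cons_child i hredp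
        obtain ⟨v, hsubv, _⟩ := hredc
        obtain ⟨u, hu⟩ := S12.exists_replaceAt hsubv bulletTm
        have hrepl2 := S12.liftB_cons_replace i hu
        have hut : Term.app (some f) (Function.update (fun j => liftB (ts j)) i u) = u_t :=
          Option.some.inj (hrepl2.symm.trans hrepl)
        rw [← hut] at hreachx
        cases hreachx with
        | app hargsx hrulex =>
            rename_i qs'
            refine ⟨u, qs', hu, hrulex, ?_, ?_⟩
            · have h1 := hargsx i
              erw [Function.update_self] at h1; exact h1
            · intro j hj
              have h1 := hargsx j
              erw [Function.update_of_ne hj] at h1; exact h1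
      -- child runs
      have hchild : ∀ i : Fin (ar f),
          Reaches (DTrans Rg.liftB C.Γ' C.enc C.enc2) (ts i)
            (dn C.Γ' (liftB (ts i)), {q' | ∃ p', (p', q') ∈ S12.childK C f ts K i}) := by
        intro i
        refine ih i (hgt i) _ ?_ ?_
        · rintro ⟨p', q'⟩ ⟨u, q, qs', hrep, hK, hrule, hqs, hreach, hrest⟩
          refine ⟨S12.redexPos_cons_child i (hvalid _ hK).1, u, hrep, hreach⟩
        · intro p' hredc
          obtain ⟨q, hK⟩ := hcover _ (S12.redexPos_cons_intro i hredc)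
          obtain ⟨u, qs', hu, hrulex, hreachu, hrest⟩ := hdec i p' q hK
          exact ⟨qs' i, u, q, qs', hu, hK, hrulex, rfl, hreachu, hrest⟩
      set Pc : Fin (ar f) → Set Q :=
        fun i => {q' | ∃ p', (p', q') ∈ S12.childK C f ts K i} with hPc
      set SPfun : Fin (ar f) → Set Q × Set Q :=
        fun i => (dn C.Γ' (liftB (ts i)), Pc i) with hSPfun
      set P1 : Set Q := {q | ∃ p, (p, q) ∈ K ∧ p ≠ []} with hP1def
      by_cases hm : LhsMatch Rg.liftB C.enc2 (some f) (fun i => (SPfun i).1)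
      case pos =>
        -- root is a redex
        have hroot : Rg.liftB.RedexPos (liftB (Term.app f ts)) [] := by
          refine ⟨liftB (Term.app f ts), S12.subtermAt_nil _, ?_⟩
          rw [S12.liftB_app]
          refine (S12.lhsMatch_iff C hll happrox
            (fun i => (S12.ground_liftB).2 (hgt i))).1 ?_
          exact S12.lhsMatch_congr C (fun i => rfl) hm
        have hxK : ([], C.enc (Term.var 0)) ∈ K := by
          obtain ⟨q0, hK0⟩ := hcover [] hroot
          obtain ⟨_, u, hrep, hreachx⟩ := hvalid _ hK0
          rw [S12.replaceAt_nil, Option.some.injEq] at hrep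
          subst hrep
          have := S12.bullet_Gx_state C hreachx
          rwa [← this]
        have hPeq : P1 ∪ ({C.enc (Term.var 0)} : Set Q) = {q | ∃ p, (p, q) ∈ K} := by
          ext q0
          constructor
          · rintro (⟨p, hK, _⟩ | hq0)
            · exact ⟨p, hK⟩
            · have : q0 = C.enc (Term.var 0) := hq0
              subst this
              exact ⟨[], hxK⟩
          · rintro ⟨p, hK⟩
            cases p with
            | nil =>
                right
                obtain ⟨_, u, hrep, hreachx⟩ := hvalid _ hK
                rw [S12.replaceAt_nil, Option.some.injEq] at hrep
                subst hrep
                exact S12.bullet_Gx_state C hreachx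
            | cons i0 p' => exact Or.inl ⟨i0 :: p', hK, by simp⟩
        have hrule : (⟨f, SPfun, (oneStep C.Γ' (some f) (fun i => (SPfun i).1),
            P1 ∪ ({C.enc (Term.var 0)} : Set Q))⟩ : TARule F ar (Set Q × Set Q))
            ∈ DTrans Rg.liftB C.Γ' C.enc C.enc2 := by
          refine ⟨f, SPfun, P1, {C.enc (Term.var 0)}, ?_, ?_, Or.inl ⟨hm, rfl⟩, rfl⟩
          · rintro q0 ⟨p, hK, hne⟩
            cases p with
            | nil => exact absurd rfl hne
            | cons i0 p' =>
                have hlt : i0 < ar f := S12.redexPos_cons_lt (hvalid _ hK).1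
                obtain ⟨u, qs', hu, hrulex, hreachu, hrest⟩ := hdec ⟨i0, hlt⟩ p' q0 hK
                rw [Set.mem_iUnion]
                refine ⟨⟨i0, hlt⟩, qs', fun (j : Fin (ar f)) => ?_, (S12.Gx_sub_Γsat C).trans
                  (S12.Γsat_sub_Γ' C) hrulex⟩
                show qs' j ∈ (if j = (⟨i0, hlt⟩ : Fin (ar f)) then (SPfun j).2 else (SPfun j).1)
                by_cases hj : j = (⟨i0, hlt⟩ : Fin (ar f))
                · subst hj
                  rw [if_pos rfl]
                  exact ⟨p', u, q0, qs', hu, hK, hrulex, rfl, hreachu, hrest⟩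
                · rw [if_neg hj]
                  show Reaches C.Γ' (liftB (ts j)) (qs' j)
                  exact S12.reaches_mono (fun ρ h => S12.Γsat_sub_Γ' C (S12.Gx_sub_Γsat C h))
                    (hrest j hj)
          · rintro i q' ⟨p', u, q0, qs', hu, hK, hrulex, hqs, hreachu, hrest⟩
            refine ⟨q0, ⟨(i : ℕ) :: p', hK, by simp⟩, qs', fun (j : Fin (ar f)) => ?_,
              (S12.Gx_sub_Γsat C).trans (S12.Γsat_sub_Γ' C) hrulex⟩
            show qs' j ∈ (if j = i then ({q'} : Set Q) else (SPfun j).1)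
            by_cases hj : j = i
            · subst hj
              rw [if_pos rfl]
              exact hqs
            · rw [if_neg hj]
              show Reaches C.Γ' (liftB (ts j)) (qs' j)
              exact S12.reaches_mono (fun ρ h => S12.Γsat_sub_Γ' C (S12.Gx_sub_Γsat C h))
                (hrest j hj)
        have hfinal : (oneStep C.Γ' (some f) (fun i => (SPfun i).1),
            P1 ∪ ({C.enc (Term.var 0)} : Set Q))
            = (dn C.Γ' (liftB (Term.app f ts)), {q | ∃ p, (p, q) ∈ K}) := by
          rw [hPeq, S12.liftB_app, S12.dn_app]
        rw [← hfinal]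
        exact Reaches.app (qs := SPfun) hchild hrule
      case neg =>
        have hPeq : P1 ∪ (∅ : Set Q) = {q | ∃ p, (p, q) ∈ K} := by
          rw [Set.union_empty]
          ext q0
          constructor
          · rintro ⟨p, hK, _⟩
            exact ⟨p, hK⟩
          · rintro ⟨p, hK⟩
            cases p with
            | nil =>
                exfalso
                refine hm ?_
                have hroot := (hvalid _ hK).1
                obtain ⟨v, hsubv, hredv⟩ := hroot
                rw [S12.subtermAt_nil, Option.some.injEq] at hsubv
                subst hsubv
                rw [S12.liftB_app] at hredv
                exact S12.lhsMatch_congr C (fun i => rfl)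
                  ((S12.lhsMatch_iff C hll happrox
                    (fun i => (S12.ground_liftB).2 (hgt i))).2 hredv)
            | cons i0 p' => exact ⟨i0 :: p', hK, by simp⟩
        have hrule : (⟨f, SPfun, (oneStep C.Γ' (some f) (fun i => (SPfun i).1),
            P1 ∪ (∅ : Set Q))⟩ : TARule F ar (Set Q × Set Q))
            ∈ DTrans Rg.liftB C.Γ' C.enc C.enc2 := by
          refine ⟨f, SPfun, P1, ∅, ?_, ?_, Or.inr ⟨hm, rfl⟩, rfl⟩
          · rintro q0 ⟨p, hK, hne⟩
            cases p with
            | nil => exact absurd rfl hne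
            | cons i0 p' =>
                have hlt : i0 < ar f := S12.redexPos_cons_lt (hvalid _ hK).1
                obtain ⟨u, qs', hu, hrulex, hreachu, hrest⟩ := hdec ⟨i0, hlt⟩ p' q0 hK
                rw [Set.mem_iUnion]
                refine ⟨⟨i0, hlt⟩, qs', fun (j : Fin (ar f)) => ?_, (S12.Gx_sub_Γsat C).trans
                  (S12.Γsat_sub_Γ' C) hrulex⟩
                show qs' j ∈ (if j = (⟨i0, hlt⟩ : Fin (ar f)) then (SPfun j).2 else (SPfun j).1)
                by_cases hj : j = (⟨i0, hlt⟩ : Fin (ar f))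
                · subst hj
                  rw [if_pos rfl]
                  exact ⟨p', u, q0, qs', hu, hK, hrulex, rfl, hreachu, hrest⟩
                · rw [if_neg hj]
                  show Reaches C.Γ' (liftB (ts j)) (qs' j)
                  exact S12.reaches_mono (fun ρ h => S12.Γsat_sub_Γ' C (S12.Gx_sub_Γsat C h))
                    (hrest j hj)
          · rintro i q' ⟨p', u, q0, qs', hu, hK, hrulex, hqs, hreachu, hrest⟩
            refine ⟨q0, ⟨(i : ℕ) :: p', hK, by simp⟩, qs', fun (j : Fin (ar f)) => ?_,
              (S12.Gx_sub_Γsat C).trans (S12.Γsat_sub_Γ' C) hrulex⟩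
            show qs' j ∈ (if j = i then ({q'} : Set Q) else (SPfun j).1)
            by_cases hj : j = i
            · subst hj
              rw [if_pos rfl]
              exact hqs
            · rw [if_neg hj]
              show Reaches C.Γ' (liftB (ts j)) (qs' j)
              exact S12.reaches_mono (fun ρ h => S12.Γsat_sub_Γ' C (S12.Gx_sub_Γsat C h))
                (hrest j hj)
        have hfinal : (oneStep C.Γ' (some f) (fun i => (SPfun i).1), P1 ∪ (∅ : Set Q))
            = (dn C.Γ' (liftB (Term.app f ts)), {q | ∃ p, (p, q) ∈ K}) := by
          rw [hPeq, S12.liftB_app, S12.dn_app]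
        rw [← hfinal]
        exact Reaches.app (qs := SPfun) hchild hrule

end S12Run
/-- Let `ℛ` be a left-linear TRS over `𝓕` and `ℛ_g` a growing
approximation of `ℛ`.  Then `ℛ ∈ CBN-NF_g` — every reducible ground term in `𝒯(𝓕)`
has an `ℛ_g`-needed redex — iff `L(𝒟(ℛ_g)) = ∅`, where `𝒟(ℛ_g)` is the powerset-pair
automaton built from `𝒞'_{NF_{ℛ•}}(ℛ_g)`. -/
theorem statement12 {F : Type} [Fintype F] {ar : F → ℕ} {Q : Type} [Fintype Q]
    (R Rg : TRS F ar) (hll : R.LeftLinear) (happrox : IsGrowingApprox R Rg)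
    (C : CpSetup Q Rg.liftB (TRS.NFset R.bullet)) :
    (∀ s : Term F ar, s.Ground → R.Reducible s →
        ∃ p, R.RedexPos s p ∧
          ¬ ∃ u, (liftB s).replaceAt p bulletTm = some u ∧
              ∃ t ∈ TRS.NFset R.bullet, RewritesStar Rg.liftB.rules u t) ↔
    Lang (DAutomaton Rg.liftB C.Γ' C.enc C.enc2 C.qr C.A.final) = ∅ := by
  constructor
  · intro hCBN
    rw [Set.eq_empty_iff_forall_notMem]
    intro s hs
    obtain ⟨hg, SP, hSPfin, hreach⟩ := hs
    obtain ⟨hqr, hPfin⟩ := hSPfin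
    have hS := S12.D_S_comp C hreach
    have hqr' : Reaches C.Γ' (liftB s) C.qr := by
      have h1 : C.qr ∈ SP.1 := hqr
      rw [hS] at h1
      exact h1
    obtain ⟨p0, hp0⟩ := S12.redex_of_reaches_qr C hll happrox hqr' rfl
    have hredR : R.Reducible s := ⟨p0, (S12.redexPos_liftB_iff hll happrox).1 hp0⟩
    obtain ⟨p, hpred, hnot⟩ := hCBN s hg hredR
    have hpredb : Rg.liftB.RedexPos (liftB s) p :=
      (S12.redexPos_liftB_iff hll happrox).2 hpred
    obtain ⟨q0, hq0P, u, hrep, hreachu⟩ := S12.D_P_cover C hll happrox hreach p hpredb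
    have hq0f : q0 ∈ C.A.final := hPfin hq0P
    have hq0QA : q0 ∈ C.QA := C.hfinal hq0f
    have hGsat := S12.Γ'_to_Γsat C hreachu (Set.mem_union_left _ hq0QA)
    have hug : u.Ground := S12.ground_of_replaceAt ((S12.ground_liftB).2 hg)
      S12.bullet_ground hrep
    obtain ⟨w', hstar, hg', hΓ0⟩ := S12.Γsat_sound C hll happrox hGsat hug
    have hA := (S12.Γ0_sep C hΓ0).1 hq0QA
    have hNF : w' ∈ TRS.NFset R.bullet := by
      rw [C.hT]
      exact ⟨hg', q0, hq0f, hA⟩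
    exact hnot ⟨u, hrep, w', hNF, hstar⟩
  · intro hempty s hg hredu
    by_contra hno
    push_neg at hno
    classical
    set K : Set (List ℕ × Q) := {pq | Rg.liftB.RedexPos (liftB s) pq.1 ∧
      ∃ u, (liftB s).replaceAt pq.1 bulletTm = some u ∧
        Reaches (S12.Gx C) u pq.2 ∧ pq.2 ∈ C.A.final} with hKdef
    have hvalid : ∀ pq ∈ K, Rg.liftB.RedexPos (liftB s) pq.1 ∧
        ∃ u, (liftB s).replaceAt pq.1 bulletTm = some u ∧ Reaches (S12.Gx C) u pq.2 := by
      rintro pq ⟨h1, u, h2, h3, _⟩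
      exact ⟨h1, u, h2, h3⟩
    have hcover : ∀ p, Rg.liftB.RedexPos (liftB s) p → ∃ q, (p, q) ∈ K := by
      intro p hp
      have hpR : R.RedexPos s p := (S12.redexPos_liftB_iff hll happrox).1 hp
      obtain ⟨u, hrep, t, hNF, hstar⟩ := hno p hpR
      have hug : u.Ground := S12.ground_of_replaceAt ((S12.ground_liftB).2 hg)
        S12.bullet_ground hrep
      obtain ⟨qf, hqf, hreachx⟩ := S12.claimD C hll happrox hstar hNF
        (fun _ => bulletTm) (fun _ => S12.bullet_ground)
      rw [S12.subst_ground hug] at hreachx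
      exact ⟨qf, hp, u, hrep, hreachx, hqf⟩
    have hrun := S12.D_run C hll happrox s hg K hvalid hcover
    obtain ⟨p0, hp0⟩ := hredu
    have hmem : s ∈ Lang (DAutomaton Rg.liftB C.Γ' C.enc C.enc2 C.qr C.A.final) := by
      refine ⟨hg, (dn C.Γ' (liftB s), {q | ∃ p, (p, q) ∈ K}), ⟨?_, ?_⟩, hrun⟩
      · exact S12.reaches_qr_of_redex C p0 (liftB s) ((S12.ground_liftB).2 hg)
          ((S12.redexPos_liftB_iff hll happrox).2 hp0)
      · rintro q ⟨p, h1, u, h2, h3, h4⟩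
        exact h4
    rw [hempty] at hmem
    exact hmem
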